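/- arXiv:2201.08198 — 7 statements merged into one kernel-verified Lean document; each statement's English description precedes it below -/
import Mathlib

section
/- (Generalized Fell absorption principle) Let G be a discrete groupoid, X a right Hilbert C*-module, and π a representation of G in the adjointable operators L(X). Define W on ℓ²(G) ⊗ X (the exterior tensor product) by W(e_f ⊗ ξ) = e_f ⊗ π(f)ξ. Then W is a partial isometry in L(ℓ²(G) ⊗ X), and for every morphism g, W(λ_g ⊗ I)W* = λ_g ⊗ π(g), where λ is the left regular representation of G. -/
open CategoryTheory ContinuousLinearMap
open scoped Classical

universe v u w u'

def Mor (V : Type v) [Groupoid V] := Σ (x : V) (y : V), x ⟶ y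

namespace Mor

variable {V : Type v} [Groupoid V]

def src (f : Mor V) : V := f.1
def tgt (f : Mor V) : V := f.2.1
def hom (f : Mor V) : f.src ⟶ f.tgt := f.2.2

def comp (g f : Mor V) (h : f.tgt = g.src) : Mor V :=
  ⟨f.src, g.tgt, f.hom ≫ eqToHom h ≫ g.hom⟩

def inv (f : Mor V) : Mor V := ⟨f.tgt, f.src, Groupoid.inv f.hom⟩
def id (x : V) : Mor V := ⟨x, x, 𝟙 x⟩

end Mor

/-- Generalized Fell absorption principle.  Let `π` be a
representation of a discrete groupoid `G` in the adjointable operators of a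
right Hilbert `A`-module `X` (the `A`-valued inner product is `innX`, and
adjoints are witnessed by `π(f)* = π(f⁻¹)`).  Let `Y = ℓ²(G) ⊗ X` be the
exterior tensor product, with `A`-valued inner product `innY`, elementary
tensors `te f ξ = e_f ⊗ ξ` whose span is dense, and let
`W(e_f ⊗ ξ) = e_f ⊗ π(f)ξ` with adjoint `Wstar`, `L g = λ_g ⊗ I` and
`Lpi g = λ_g ⊗ π(g)`.  Then `W` is a partial isometry and
`W (λ_g ⊗ I) W* = λ_g ⊗ π(g)` for every morphism `g`. -/
theorem statement5 {V : Type v} [Groupoid V]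
    {A : Type u} [NonUnitalCStarAlgebra A]
    -- the Hilbert module `X`
    {X : Type w} [NormedAddCommGroup X] [NormedSpace ℂ X]
    (innX : X → X → A)
    (hXadd : ∀ ξ η₁ η₂, innX ξ (η₁ + η₂) = innX ξ η₁ + innX ξ η₂)
    (hXsmul : ∀ (c : ℂ) ξ η, innX ξ (c • η) = c • innX ξ η)
    (hXstar : ∀ ξ η, star (innX ξ η) = innX η ξ)
    (hXnorm : ∀ ξ, ‖ξ‖ ^ 2 = ‖innX ξ ξ‖)
    -- the representation `π` of `G` in `L(X)`
    (π : Mor V → (X →L[ℂ] X))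
    (hπmul : ∀ (f g : Mor V) (h : g.tgt = f.src), π f ∘L π g = π (f.comp g h))
    (hπzero : ∀ f g : Mor V, g.tgt ≠ f.src → π f ∘L π g = 0)
    (hπadj : ∀ (f : Mor V) (ξ η : X), innX (π f ξ) η = innX ξ (π f.inv η))
    -- the exterior tensor product `Y = ℓ²(G) ⊗ X`
    {Y : Type u'} [NormedAddCommGroup Y] [NormedSpace ℂ Y] [CompleteSpace Y]
    (innY : Y → Y → A)
    (hYadd : ∀ u v₁ v₂, innY u (v₁ + v₂) = innY u v₁ + innY u v₂)
    (hYsmul : ∀ (c : ℂ) u v, innY u (c • v) = c • innY u v)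
    (hYstar : ∀ u v, star (innY u v) = innY v u)
    (hYnorm : ∀ u, ‖u‖ ^ 2 = ‖innY u u‖)
    (hYdef : ∀ u, innY u u = 0 → u = 0)
    (hYcont : Continuous fun p : Y × Y => innY p.1 p.2)
    -- elementary tensors `e_f ⊗ ξ`
    (te : Mor V → (X →L[ℂ] Y))
    (hte : ∀ (f g : Mor V) (ξ η : X),
      innY (te f ξ) (te g η) = if f = g then innX ξ η else 0)
    (hdense : Dense (↑(Submodule.span ℂ (⋃ f : Mor V, Set.range (te f))) : Set Y))
    -- the operator `W` and its adjoint
    (W Wstar : Y →L[ℂ] Y)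
    (hW : ∀ (f : Mor V) (ξ : X), W (te f ξ) = te f (π f ξ))
    (hWadj : ∀ u v, innY (W u) v = innY u (Wstar v))
    -- `λ_g ⊗ I` and `λ_g ⊗ π(g)`
    (L Lpi : Mor V → (Y →L[ℂ] Y))
    (hL : ∀ (g f : Mor V) (ξ : X),
      L g (te f ξ) = if h : f.tgt = g.src then te (g.comp f h) ξ else 0)
    (hLpi : ∀ (g f : Mor V) (ξ : X),
      Lpi g (te f ξ) = if h : f.tgt = g.src then te (g.comp f h) (π g ξ) else 0) :
    (W ∘L Wstar ∘L W = W) ∧ ∀ g : Mor V, W ∘L L g ∘L Wstar = Lpi g := by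

  -- basic linearity facts for `innY` in the first variable
  have hadd1 : ∀ u₁ u₂ v : Y, innY (u₁ + u₂) v = innY u₁ v + innY u₂ v := by
    intro u₁ u₂ v
    rw [← hYstar, hYadd, star_add, hYstar, hYstar]
  have hsmul1 : ∀ (c : ℂ) (u v : Y), innY (c • u) v = star c • innY u v := by
    intro c u v
    rw [← hYstar, hYsmul, star_smul, hYstar]
  have h0l : ∀ v : Y, innY (0 : Y) v = 0 := by
    intro v
    have h := hsmul1 0 0 v
    simpa using h
  have hYsub : ∀ u v₁ v₂ : Y, innY u (v₁ - v₂) = innY u v₁ - innY u v₂ := by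
    intro u v₁ v₂
    have h := hYadd u (v₁ - v₂) v₂
    rw [sub_add_cancel] at h
    exact eq_sub_of_add_eq h.symm
  -- a vector is determined by its inner products with all vectors
  have key : ∀ a b : Y, (∀ (f : Mor V) (ξ : X), innY (te f ξ) a = innY (te f ξ) b) →
      a = b := by
    intro a b hab
    have hall : ∀ u : Y, innY u a = innY u b := by
      have hcont1 : Continuous fun u : Y => innY u a - innY u b := by
        have h1 : Continuous fun u : Y => innY u a :=
          hYcont.comp (continuous_id.prodMk continuous_const)
        have h2 : Continuous fun u : Y => innY u b :=
          hYcont.comp (continuous_id.prodMk continuous_const)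
        exact h1.sub h2
      have hzero : ∀ u ∈ (Submodule.span ℂ (⋃ f : Mor V, Set.range (te f)) : Submodule ℂ Y),
          innY u a - innY u b = 0 := by
        intro u hu
        induction hu using Submodule.span_induction with
        | mem x hx =>
          obtain ⟨s, ⟨f, rfl⟩, hxs⟩ := hx
          obtain ⟨ξ, rfl⟩ := hxs
          rw [hab f ξ, sub_self]
        | zero => rw [h0l, h0l, sub_self]
        | add x y hx hy ihx ihy =>
          rw [hadd1, hadd1]
          rw [sub_eq_zero] at ihx ihy ⊢
          rw [ihx, ihy]
        | smul c x hx ihx =>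
          rw [hsmul1, hsmul1]
          rw [sub_eq_zero] at ihx ⊢
          rw [ihx]
      have heqon : Set.EqOn (fun u : Y => innY u a - innY u b) (fun _ => (0 : A))
          (↑(Submodule.span ℂ (⋃ f : Mor V, Set.range (te f)))) := fun u hu => hzero u hu
      have hfun := Continuous.ext_on hdense hcont1 continuous_const heqon
      intro u
      have := congrFun hfun u
      exact sub_eq_zero.mp this
    have h0 : innY (a - b) (a - b) = 0 := by
      rw [hYsub, hall (a - b), sub_self]
    have := hYdef _ h0
    exact sub_eq_zero.mp this
  -- two operators agreeing on elementary tensors are equal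
  have opext : ∀ T S : Y →L[ℂ] Y, (∀ (f : Mor V) (ξ : X), T (te f ξ) = S (te f ξ)) →
      T = S := by
    intro T S h
    have heqon : Set.EqOn (⇑T) (⇑S)
        (↑(Submodule.span ℂ (⋃ f : Mor V, Set.range (te f)))) := by
      intro u hu
      induction hu using Submodule.span_induction with
      | mem x hx =>
        obtain ⟨s, ⟨f, rfl⟩, hxs⟩ := hx
        obtain ⟨ξ, rfl⟩ := hxs
        exact h f ξ
      | zero => simp
      | add x y hx hy ihx ihy => simp [map_add, ihx, ihy]
      | smul c x hx ihx => simp [map_smul, ihx]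
    have hfun := Continuous.ext_on hdense T.continuous S.continuous heqon
    exact ContinuousLinearMap.ext fun u => congrFun hfun u
  -- the action of `Wstar` on elementary tensors
  have hWstar : ∀ (f : Mor V) (η : X), Wstar (te f η) = te f (π f.inv η) := by
    intro f η
    apply key
    intro g ζ
    rw [← hWadj, hW, hte, hte]
    split_ifs with hgf
    · subst hgf
      exact hπadj g ζ η
    · rfl
  -- groupoid computations
  have hc1 : ∀ f : Mor V, f.inv.comp f rfl = Mor.id f.src := by
    intro f
    obtain ⟨x, y, ff⟩ := f
    show (⟨x, x, ff ≫ eqToHom (rfl : y = y) ≫ Groupoid.inv ff⟩ : Mor V) = ⟨x, x, 𝟙 x⟩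
    simp [Mor.comp, Mor.inv, Mor.id, Mor.src, Mor.tgt, Mor.hom]
  have hc2 : ∀ f : Mor V, f.comp (Mor.id f.src) rfl = f := by
    intro f
    obtain ⟨x, y, ff⟩ := f
    simp [Mor.comp, Mor.id, Mor.src, Mor.tgt, Mor.hom]
    rfl
  have hcompinv : ∀ (g f : Mor V) (h : f.tgt = g.src),
      (g.comp f h).comp f.inv rfl = g := by
    intro g f h
    obtain ⟨x, y, ff⟩ := f
    obtain ⟨y', z, gg⟩ := g
    dsimp [Mor.tgt, Mor.src] at h
    subst h
    simp [Mor.comp, Mor.inv, Mor.src, Mor.tgt, Mor.hom]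
    rfl
  have hπfif : ∀ (f : Mor V) (ξ : X), π f (π f.inv (π f ξ)) = π f ξ := by
    intro f ξ
    have h1 : π f.inv (π f ξ) = π (Mor.id f.src) ξ := by
      have hm := hπmul f.inv f rfl
      calc π f.inv (π f ξ) = (π f.inv ∘L π f) ξ := rfl
        _ = π (f.inv.comp f rfl) ξ := by rw [hm]
        _ = π (Mor.id f.src) ξ := by rw [hc1]
    rw [h1]
    have hm := hπmul f (Mor.id f.src) rfl
    calc π f (π (Mor.id f.src) ξ) = (π f ∘L π (Mor.id f.src)) ξ := rfl
      _ = π (f.comp (Mor.id f.src) rfl) ξ := by rw [hm]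
      _ = π f ξ := by rw [hc2]
  constructor
  · apply opext
    intro f ξ
    simp only [ContinuousLinearMap.comp_apply]
    rw [hW, hWstar, hW, hπfif]
  · intro g
    apply opext
    intro f ξ
    simp only [ContinuousLinearMap.comp_apply]
    rw [hWstar, hL, hLpi]
    split_ifs with h
    · rw [hW]
      congr 1
      have hm := hπmul (g.comp f h) f.inv rfl
      have hc := hcompinv g f h
      calc π (g.comp f h) (π f.inv ξ) = (π (g.comp f h) ∘L π f.inv) ξ := rfl
        _ = π ((g.comp f h).comp f.inv rfl) ξ := by rw [hm]
        _ = π g ξ := by rw [hc]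
    · exact map_zero W
end

section
/- Let (G', P') be a quasi-lattice ordered group acting on a set X, and let G be the transformation groupoid with objects X and morphisms G(x,y) = {g ∈ G' : g·x = y}. Let P be the wide subcategory with P(x,y) = {g ∈ P' : g·x = y}. Then (G, P) is a quasi-lattice ordered groupoid. -/
open CategoryTheory

universe v u w

/-- A wide subcategory of a groupoid. -/
structure WideSub (V : Type v) [Groupoid V] where
  mem : ∀ ⦃x y : V⦄, (x ⟶ y) → Prop
  id_mem : ∀ x : V, mem (𝟙 x)
  comp_mem : ∀ ⦃x y z : V⦄ (f : x ⟶ y) (g : y ⟶ z), mem f → mem g → mem (f ≫ g)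

/-- `f ≤ g` iff `f⁻¹g ∈ P(-,-)`. -/
def WideSub.le {V : Type v} [Groupoid V] (P : WideSub V) (f g : Mor V) : Prop :=
  ∃ h : f.tgt = g.tgt, P.mem (g.hom ≫ eqToHom h.symm ≫ Groupoid.inv f.hom)

/-- `g` is an upper bound in `P` for the set `S` of morphisms. -/
def WideSub.IsUB {V : Type v} [Groupoid V] (P : WideSub V) (S : Set (Mor V))
    (g : Mor V) : Prop :=
  P.mem g.hom ∧ ∀ f ∈ S, P.le f g

/-- `(G, P)` is a quasi-lattice ordered groupoid: `P(x,y) ∩ P⁻¹(x,y)` is empty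
for `x ≠ y` and `{1_x}` for `x = y`, and every (nonempty) finite set of
morphisms of `G` with an upper bound in `P` has a least upper bound in `P`. -/
def WideSub.IsQuasiLatticeOrdered {V : Type v} [Groupoid V] (P : WideSub V) : Prop :=
  (∀ ⦃x y : V⦄ (f : x ⟶ y), P.mem f → P.mem (Groupoid.inv f) →
      ∃ h : x = y, f = eqToHom h) ∧
  ∀ S : Set (Mor V), S.Finite → S.Nonempty → (∃ g, P.IsUB S g) →
    ∃ g, P.IsUB S g ∧ ∀ g', P.IsUB S g' → P.le g g'

/-- Objects of the transformation groupoid of the action of `G'` on `X`. -/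
structure TOb (G' : Type u) (X : Type w) where
  pt : X

variable {G' : Type u} [Group G'] {X : Type w} [MulAction G' X]

/-- The transformation groupoid: morphisms from `x` to `y` are group elements
`g` with `g • x = y`. -/
instance : Groupoid (TOb G' X) where
  Hom x y := {g : G' // g • x.pt = y.pt}
  id x := ⟨1, one_smul G' x.pt⟩
  comp f g := ⟨g.val * f.val, by rw [mul_smul, f.prop, g.prop]⟩
  id_comp f := Subtype.ext (by simp)
  comp_id f := Subtype.ext (by simp)
  assoc f g h := Subtype.ext (mul_assoc _ _ _).symm
  inv f := ⟨f.val⁻¹, inv_smul_eq_iff.mpr f.prop.symm⟩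
  inv_comp f := Subtype.ext (by simp)
  comp_inv f := Subtype.ext (by simp)

/-- The wide subcategory `P` with `P(x,y) = {g ∈ P' : g • x = y}`. -/
def transWide (P' : Submonoid G') : WideSub (TOb G' X) where
  mem {x y} f := f.val ∈ P'
  id_mem x := one_mem P'
  comp_mem {x y z} f g hf hg := mul_mem hg hf


section Aux
variable (P' : Submonoid G')

lemma comp_val {x y z : TOb G' X} (f : x ⟶ y) (g : y ⟶ z) :
    (f ≫ g).val = g.val * f.val := rfl

lemma inv_val {x y : TOb G' X} (f : x ⟶ y) :
    (Groupoid.inv f).val = f.val⁻¹ := rfl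

lemma inv_val' {x y : TOb G' X} (f : x ⟶ y) :
    (CategoryTheory.inv f).val = f.val⁻¹ := by
  rw [← Groupoid.inv_eq_inv]; rfl

lemma eqToHom_val {x y : TOb G' X} (h : x = y) : (eqToHom h).val = 1 := by
  subst h; rfl

lemma mem_iff {x y : TOb G' X} (f : x ⟶ y) :
    (transWide P').mem f ↔ f.val ∈ P' := Iff.rfl

end Aux

/-- for a quasi-lattice ordered group `(G', P')` acting on a set
`X`, the transformation groupoid `G` with the wide subcategory
`P(x,y) = {g ∈ P' : g • x = y}` is a quasi-lattice ordered groupoid. -/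
theorem statement8 (P' : Submonoid G')
    (hP : ∀ a ∈ P', a⁻¹ ∈ P' → a = 1)
    (hql : ∀ A : Set G', A.Finite →
      (∃ u ∈ P', ∀ a ∈ A, a⁻¹ * u ∈ P') →
      ∃ u ∈ P', (∀ a ∈ A, a⁻¹ * u ∈ P') ∧
        ∀ v ∈ P', (∀ a ∈ A, a⁻¹ * v ∈ P') → u⁻¹ * v ∈ P') :
    (transWide P' : WideSub (TOb G' X)).IsQuasiLatticeOrdered := by
  constructor
  · rintro ⟨x⟩ ⟨y⟩ f hf hinv
    have h1 : f.val = 1 := hP _ hf hinv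
    have hxy : x = y := by
      have := f.prop
      rwa [h1, one_smul] at this
    subst hxy
    refine ⟨rfl, Subtype.ext ?_⟩
    rw [eqToHom_refl]
    exact h1
  · rintro S hSfin hSne ⟨g₀, hg₀mem, hg₀ub⟩
    set A : Set G' := (fun f : Mor (TOb G' X) => (Mor.hom f).val) '' S with hA
    have hAfin : A.Finite := hSfin.image _
    have htgt : ∀ f ∈ S, Mor.tgt f = Mor.tgt g₀ := fun f hf => (hg₀ub f hf).1
    have hval : ∀ f ∈ S, (Mor.hom f).val⁻¹ * (Mor.hom g₀).val ∈ P' := by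
      intro f hf
      obtain ⟨h, hmem⟩ := hg₀ub f hf
      rw [mem_iff] at hmem
      simpa [comp_val, inv_val, inv_val', eqToHom_val, mul_assoc] using hmem
    obtain ⟨u, huP, huA, hulub⟩ := hql A hAfin
      ⟨(Mor.hom g₀).val, hg₀mem, by rintro a ⟨f, hf, rfl⟩; exact hval f hf⟩
    set y₀ : TOb G' X := Mor.tgt g₀ with hy₀
    refine ⟨⟨⟨u⁻¹ • y₀.pt⟩, y₀, ⟨u, by simp⟩⟩, ⟨huP, ?_⟩, ?_⟩
    · intro f hf
      refine ⟨htgt f hf, ?_⟩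
      rw [mem_iff]
      simp only [comp_val, inv_val, inv_val', eqToHom_val]
      simpa [comp_val, inv_val, inv_val', eqToHom_val, mul_assoc, Mor.hom] using
        huA _ ⟨f, hf, rfl⟩
    · rintro g' ⟨hg'mem, hg'ub⟩
      obtain ⟨f₀, hf₀⟩ := hSne
      have htg' : y₀ = Mor.tgt g' := (htgt f₀ hf₀).symm.trans (hg'ub f₀ hf₀).1
      refine ⟨htg', ?_⟩
      rw [mem_iff]
      have hAg' : ∀ a ∈ A, a⁻¹ * (Mor.hom g').val ∈ P' := by
        rintro a ⟨f, hf, rfl⟩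
        obtain ⟨h, hmem⟩ := hg'ub f hf
        rw [mem_iff] at hmem
        simpa [comp_val, inv_val, inv_val', eqToHom_val, mul_assoc] using hmem
      simp only [comp_val, inv_val, inv_val', eqToHom_val]
      simpa [comp_val, inv_val, inv_val', eqToHom_val, mul_assoc, Mor.hom] using
        hulub _ hg'mem hAg'
end

section
/- Let Fb be a Fell bundle over a discrete groupoid G and π : C_c(Fb) → C a *-homomorphism into a C*-algebra. Then for every morphism f and b ∈ B_f one has ||π(j_f(b))|| ≤ ||b||, and consequently ||π(ξ)|| ≤ Σ_{f} ||ξ(f)|| for every finitely supported section ξ ∈ C_c(Fb). -/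
open CategoryTheory

universe v u u'

/-- A (concretely represented) Fell bundle over a discrete groupoid. -/
structure FellBundle (V : Type v) [Groupoid V] (E : Type u)
    [NonUnitalCStarAlgebra E] where
  fib : Mor V → Submodule ℂ E
  isClosed : ∀ f, IsClosed (fib f : Set E)
  mul_mem : ∀ (f g : Mor V) (h : g.tgt = f.src) ⦃a b : E⦄,
    a ∈ fib f → b ∈ fib g → a * b ∈ fib (f.comp g h)
  mul_eq_zero : ∀ f g : Mor V, g.tgt ≠ f.src →
    ∀ ⦃a b : E⦄, a ∈ fib f → b ∈ fib g → a * b = 0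
  star_mem : ∀ (f : Mor V) ⦃a : E⦄, a ∈ fib f → star a ∈ fib f.inv

variable {V : Type v} [Groupoid V] {E : Type u} [NonUnitalCStarAlgebra E]

/-- The *-algebra `C_c(Fb)` of finitely supported sections of the Fell bundle,
realized as the *-subalgebra generated by the fibers. -/
def FellBundle.Cc (Fb : FellBundle V E) : NonUnitalStarSubalgebra ℂ E :=
  NonUnitalStarAlgebra.adjoin ℂ (⋃ f : Mor V, (Fb.fib f : Set E))

lemma Mor.inv_comp_self (f : Mor V) : f.inv.comp f rfl = Mor.id f.src := by
  simp [Mor.comp, Mor.inv, Mor.id, Mor.hom, Mor.src, Mor.tgt]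
  rfl

lemma Mor.id_comp_id (x : V) : (Mor.id x).comp (Mor.id x) rfl = Mor.id x := by
  simp [Mor.comp, Mor.id, Mor.hom, Mor.src, Mor.tgt]
  rfl

lemma Mor.inv_id (x : V) : (Mor.id x).inv = Mor.id x := by
  simp [Mor.inv, Mor.id, Mor.hom, Mor.src, Mor.tgt]
  rfl

/-- The unit fiber `B_{1_x}` of a Fell bundle, as a non-unital star subalgebra of `E`. -/
def FellBundle.unitFiber (Fb : FellBundle V E) (x : V) : NonUnitalStarSubalgebra ℂ E where
  carrier := Fb.fib (Mor.id x)
  add_mem' ha hb := (Fb.fib _).add_mem ha hb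
  zero_mem' := (Fb.fib _).zero_mem
  mul_mem' := fun {a b} ha hb => by
    have := Fb.mul_mem (Mor.id x) (Mor.id x) rfl ha hb
    rwa [Mor.id_comp_id] at this
  smul_mem' c a ha := (Fb.fib _).smul_mem c ha
  star_mem' := fun {a} ha => by
    have := Fb.star_mem (Mor.id x) ha
    rwa [Mor.inv_id] at this

instance (Fb : FellBundle V E) (x : V) : IsClosed ((Fb.unitFiber x : Set E)) :=
  Fb.isClosed _

lemma FellBundle.unitFiber_le_Cc (Fb : FellBundle V E) (x : V) :
    Fb.unitFiber x ≤ Fb.Cc := fun a ha =>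
  NonUnitalStarAlgebra.subset_adjoin ℂ _ (Set.mem_iUnion.mpr ⟨Mor.id x, ha⟩)

/-- every *-homomorphism `π` from `C_c(Fb)` into a C*-algebra `C`
is contractive on each fiber, `‖π(j_f(b))‖ ≤ ‖b‖`, and consequently
`‖π(ξ)‖ ≤ Σ_f ‖ξ(f)‖` for every finitely supported section `ξ`. -/
theorem statement11 (Fb : FellBundle V E) {C : Type u'} [NonUnitalCStarAlgebra C]
    (π : Fb.Cc →⋆ₙₐ[ℂ] C) :
    (∀ (f : Mor V) (b : E) (hb : b ∈ Fb.fib f),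
      ‖π ⟨b, NonUnitalStarAlgebra.subset_adjoin ℂ _ (Set.mem_iUnion.mpr ⟨f, hb⟩)⟩‖ ≤ ‖b‖) ∧
    ∀ (s : Finset (Mor V)) (ξ : Mor V → E) (hξ : ∀ f, ξ f ∈ Fb.fib f),
      ‖π ⟨∑ f ∈ s, ξ f, sum_mem fun f _ =>
        NonUnitalStarAlgebra.subset_adjoin ℂ _ (Set.mem_iUnion.mpr ⟨f, hξ f⟩)⟩‖ ≤
      ∑ f ∈ s, ‖ξ f‖ := by
  have key : ∀ (f : Mor V) (b : E) (hb : b ∈ Fb.fib f),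
      ‖π ⟨b, NonUnitalStarAlgebra.subset_adjoin ℂ _ (Set.mem_iUnion.mpr ⟨f, hb⟩)⟩‖ ≤ ‖b‖ := by
    intro f b hb
    set x := f.src with hx
    -- the composite *-homomorphism from the unit fiber C*-algebra
    let ψ : Fb.unitFiber x →⋆ₙₐ[ℂ] C :=
      π.comp (NonUnitalStarSubalgebra.inclusion (Fb.unitFiber_le_Cc x))
    have hsb : star b * b ∈ Fb.fib (Mor.id x) := by
      have := Fb.mul_mem f.inv f rfl (Fb.star_mem f hb) hb
      rwa [Mor.inv_comp_self] at this
    set jb : Fb.Cc := ⟨b, NonUnitalStarAlgebra.subset_adjoin ℂ _ (Set.mem_iUnion.mpr ⟨f, hb⟩)⟩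
    have h1 : star (π jb) * π jb = ψ ⟨star b * b, hsb⟩ := by
      rw [← map_star, ← map_mul]
      rfl
    have h2 : ‖ψ ⟨star b * b, hsb⟩‖ ≤ ‖star b * b‖ := by
      have := NonUnitalStarAlgHom.norm_apply_le ψ ⟨star b * b, hsb⟩
      simpa using this
    have h3 : ‖π jb‖ * ‖π jb‖ ≤ ‖b‖ * ‖b‖ := by
      calc ‖π jb‖ * ‖π jb‖ = ‖star (π jb) * π jb‖ := (CStarRing.norm_star_mul_self).symm
        _ = ‖ψ ⟨star b * b, hsb⟩‖ := by rw [h1]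
        _ ≤ ‖star b * b‖ := h2
        _ = ‖b‖ * ‖b‖ := CStarRing.norm_star_mul_self
    nlinarith [norm_nonneg (π jb), norm_nonneg b]
  refine ⟨key, ?_⟩
  intro s ξ hξ
  have hmem : ∀ f : Mor V, ξ f ∈ Fb.Cc := fun f =>
    NonUnitalStarAlgebra.subset_adjoin ℂ _ (Set.mem_iUnion.mpr ⟨f, hξ f⟩)
  have heq : (⟨∑ f ∈ s, ξ f, sum_mem fun f _ =>
        NonUnitalStarAlgebra.subset_adjoin ℂ _ (Set.mem_iUnion.mpr ⟨f, hξ f⟩)⟩ : Fb.Cc) =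
      ∑ f ∈ s, (⟨ξ f, hmem f⟩ : Fb.Cc) := by
    ext
    simp
  rw [heq, map_sum]
  calc ‖∑ f ∈ s, π ⟨ξ f, hmem f⟩‖ ≤ ∑ f ∈ s, ‖π ⟨ξ f, hmem f⟩‖ := norm_sum_le _ _
    _ ≤ ∑ f ∈ s, ‖ξ f‖ := Finset.sum_le_sum fun f _ => key f (ξ f) (hξ f)
end

section
/- Let Fb = {B_g}_{g ∈ G(-,-)} be a Fell bundle over a discrete groupoid G and let Λ be its left regular representation on the right Hilbert C₀({B_x})-module L²(Fb), given by (Λ(b_f)ξ)(g) = b_f ξ(f⁻¹g) if t(g) = t(f) and 0 otherwise. Then Λ(b_f) is adjointable, ||Λ(b_f)|| = ||b_f||, and Λ(b_f)Λ(b_g) = Λ(b_f b_g) when s(f) = t(g), Λ(b_f)Λ(b_g) = 0 when s(f) ≠ t(g), and Λ(b_f)* = Λ(b_f*). -/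
open CategoryTheory ContinuousLinearMap
open scoped Classical

universe v u w u'

namespace MorAux
open Mor
variable {V : Type v} [Groupoid V]

@[simp] lemma comp_src (g f : Mor V) (h : f.tgt = g.src) : (g.comp f h).src = f.src := rfl
@[simp] lemma comp_tgt (g f : Mor V) (h : f.tgt = g.src) : (g.comp f h).tgt = g.tgt := rfl
@[simp] lemma inv_src (f : Mor V) : f.inv.src = f.tgt := rfl
@[simp] lemma inv_tgt (f : Mor V) : f.inv.tgt = f.src := rfl
@[simp] lemma id_src (x : V) : (Mor.id x).src = x := rfl
@[simp] lemma id_tgt (x : V) : (Mor.id x).tgt = x := rfl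

lemma id_comp (f : Mor V) (x : V) (h : f.tgt = (Mor.id x).src) :
    (Mor.id x).comp f h = f := by
  obtain ⟨a, b, φ⟩ := f
  dsimp [Mor.tgt, Mor.src, Mor.id] at h
  subst h
  simp [Mor.comp, Mor.id, Mor.hom, Mor.src, Mor.tgt]
  rfl

lemma comp_id (f : Mor V) (x : V) (h : (Mor.id x).tgt = f.src) :
    f.comp (Mor.id x) h = f := by
  obtain ⟨a, b, φ⟩ := f
  dsimp [Mor.tgt, Mor.src, Mor.id] at h
  subst h
  simp [Mor.comp, Mor.id, Mor.hom, Mor.src, Mor.tgt]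
  rfl

lemma comp_assoc (f g k : Mor V) (h₁ : k.tgt = g.src) (h₂ : g.tgt = f.src)
    (h₂' : (g.comp k h₁).tgt = f.src) (h₁' : k.tgt = (f.comp g h₂).src) :
    f.comp (g.comp k h₁) h₂' = (f.comp g h₂).comp k h₁' := by
  obtain ⟨a, b, φ⟩ := k
  obtain ⟨b', c, ψ⟩ := g
  obtain ⟨c', d, χ⟩ := f
  dsimp [Mor.tgt, Mor.src] at h₁ h₂
  subst h₁; subst h₂
  simp [Mor.comp, Mor.hom, Mor.src, Mor.tgt]
  erw [eqToHom_refl, Category.id_comp]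

lemma inv_comp (f : Mor V) (h : f.tgt = f.inv.src) : f.inv.comp f h = Mor.id f.src := by
  obtain ⟨a, b, φ⟩ := f
  simp [Mor.comp, Mor.inv, Mor.id, Mor.hom, Mor.src, Mor.tgt]
  erw [eqToHom_refl, Category.id_comp, IsIso.hom_inv_id]

lemma comp_inv (f : Mor V) (h : f.inv.tgt = f.src) : f.comp f.inv h = Mor.id f.tgt := by
  obtain ⟨a, b, φ⟩ := f
  simp [Mor.comp, Mor.inv, Mor.id, Mor.hom, Mor.src, Mor.tgt]
  rfl

lemma inv_comp_comp (f g : Mor V) (h : g.tgt = f.src)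
    (h' : (f.comp g h).tgt = f.inv.src) :
    f.inv.comp (f.comp g h) h' = g := by
  obtain ⟨a, b, φ⟩ := g
  obtain ⟨b', c, ψ⟩ := f
  dsimp [Mor.tgt, Mor.src] at h
  subst h
  simp [Mor.comp, Mor.inv, Mor.id, Mor.hom, Mor.src, Mor.tgt]
  rfl

lemma comp_left_cancel {f g g' : Mor V} (h : g.tgt = f.src) (h' : g'.tgt = f.src)
    (e : f.comp g h = f.comp g' h') : g = g' := by
  have e1 := inv_comp_comp f g h rfl
  have e2 := inv_comp_comp f g' h' rfl
  rw [← e1, ← e2]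
  congr 1


lemma comp_inv_comp (f k : Mor V) (h : k.tgt = f.inv.src)
    (h' : (f.inv.comp k h).tgt = f.src) :
    f.comp (f.inv.comp k h) h' = k := by
  obtain ⟨a, b, φ⟩ := k
  obtain ⟨b', c, ψ⟩ := f
  dsimp [Mor.tgt, Mor.src, Mor.inv] at h
  subst h
  simp [Mor.comp, Mor.inv, Mor.id, Mor.hom, Mor.src, Mor.tgt]
  rfl

end MorAux

section OrthSum
variable {A : Type*} [NonUnitalCStarAlgebra A]

/-- iterated squaring `a ^ (2^k)` in a non-unital algebra -/
private def sqIter (a : A) : ℕ → A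
  | 0 => a
  | k+1 => sqIter a k * sqIter a k

private lemma sqIter_isSelfAdjoint {a : A} (ha : IsSelfAdjoint a) (k : ℕ) :
    IsSelfAdjoint (sqIter a k) := by
  induction k with
  | zero => exact ha
  | succ k ih => rw [IsSelfAdjoint, sqIter, star_mul, ih.star_eq]

private lemma sqIter_norm {a : A} (ha : IsSelfAdjoint a) (k : ℕ) :
    ‖sqIter a k‖ = ‖a‖ ^ (2^k) := by
  induction k with
  | zero => simp [sqIter]
  | succ k ih =>
      have hsa := sqIter_isSelfAdjoint ha k
      have h1 : sqIter a (k+1) = star (sqIter a k) * sqIter a k := by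
        rw [sqIter, hsa.star_eq]
      rw [h1, CStarRing.norm_star_mul_self, ih, ← pow_add]
      congr 1
      omega

private lemma sqIter_mul_eq_zero {a b : A} (h : a * b = 0) (k : ℕ) :
    sqIter a k * sqIter b k = 0 := by
  induction k with
  | zero => exact h
  | succ k ih =>
      show (sqIter a k * sqIter a k) * (sqIter b k * sqIter b k) = 0
      calc (sqIter a k * sqIter a k) * (sqIter b k * sqIter b k)
          = sqIter a k * ((sqIter a k * sqIter b k) * sqIter b k) := by
            simp only [mul_assoc]
        _ = 0 := by rw [ih, zero_mul, mul_zero]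

private lemma sqIter_sum {ι : Type*} (s : Finset ι) (t : ι → A)
    (horth : ∀ i ∈ s, ∀ j ∈ s, i ≠ j → t i * t j = 0) (k : ℕ) :
    sqIter (∑ i ∈ s, t i) k = ∑ i ∈ s, sqIter (t i) k := by
  induction k with
  | zero => rfl
  | succ k ih =>
      show sqIter (∑ i ∈ s, t i) k * sqIter (∑ i ∈ s, t i) k = _
      rw [ih, Finset.sum_mul_sum]
      refine Finset.sum_congr rfl fun i hi => ?_
      refine Finset.sum_eq_single i (fun j hj hne => ?_) (fun h => (h hi).elim)
      exact sqIter_mul_eq_zero (horth i hi j hj (Ne.symm hne)) k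

lemma norm_orth_sum_le {ι : Type*} (s : Finset ι) (t : ι → A)
    (hsa : ∀ i ∈ s, IsSelfAdjoint (t i))
    (horth : ∀ i ∈ s, ∀ j ∈ s, i ≠ j → t i * t j = 0)
    {M : ℝ} (hM : 0 ≤ M) (hb : ∀ i ∈ s, ‖t i‖ ≤ M) :
    ‖∑ i ∈ s, t i‖ ≤ M := by
  have hTsa : IsSelfAdjoint (∑ i ∈ s, t i) := by
    rw [IsSelfAdjoint, star_sum]
    exact Finset.sum_congr rfl fun i hi => (hsa i hi).star_eq
  have key : ∀ k : ℕ, ‖∑ i ∈ s, t i‖ ^ (2^k) ≤ (s.card : ℝ) * M ^ (2^k) := by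
    intro k
    rw [← sqIter_norm hTsa, sqIter_sum s t horth]
    refine (norm_sum_le _ _).trans ?_
    have : ∀ i ∈ s, ‖sqIter (t i) k‖ ≤ M ^ (2^k) := fun i hi => by
      rw [sqIter_norm (hsa i hi)]
      exact pow_le_pow_left₀ (norm_nonneg _) (hb i hi) _
    calc ∑ i ∈ s, ‖sqIter (t i) k‖ ≤ ∑ _i ∈ s, M ^ (2^k) := Finset.sum_le_sum this
      _ = (s.card : ℝ) * M ^ (2^k) := by rw [Finset.sum_const, nsmul_eq_mul]
  by_contra hlt
  push_neg at hlt
  rcases hM.eq_or_lt with h0 | hMpos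
  · have : ∀ i ∈ s, t i = 0 := fun i hi =>
      norm_le_zero_iff.mp (h0 ▸ hb i hi)
    rw [Finset.sum_eq_zero this] at hlt
    simp at hlt
    exact absurd hlt (by simpa [← h0] using hM.not_lt.elim)
  · set T := ‖∑ i ∈ s, t i‖ with hT
    have hr : 1 < T / M := (one_lt_div hMpos).mpr hlt
    obtain ⟨k, hk⟩ := pow_unbounded_of_one_lt (s.card : ℝ) hr
    have h1 : (T / M) ^ k ≤ (T / M) ^ (2^k) :=
      pow_le_pow_right₀ hr.le (Nat.lt_two_pow_self (n := k)).le
    have h2 : (T / M) ^ (2^k) ≤ (s.card : ℝ) := by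
      rw [div_pow, div_le_iff₀ (pow_pos hMpos _)]
      exact key k
    exact absurd ((hk.trans_le h1).trans_le h2) (lt_irrefl _)

lemma norm_le_norm_orth_sum {ι : Type*} (s : Finset ι) (t : ι → A)
    (hsa : ∀ i ∈ s, IsSelfAdjoint (t i))
    (horth : ∀ i ∈ s, ∀ j ∈ s, i ≠ j → t i * t j = 0)
    {i : ι} (hi : i ∈ s) : ‖t i‖ ≤ ‖∑ j ∈ s, t j‖ := by
  have hmul : t i * ∑ j ∈ s, t j = t i * t i := by
    rw [Finset.mul_sum]
    exact Finset.sum_eq_single i (fun j hj hne => horth i hi j hj (Ne.symm hne))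
      (fun h => (h hi).elim)
  rcases eq_or_lt_of_le (norm_nonneg (t i)) with h0 | hpos
  · rw [← h0]; exact norm_nonneg _
  · have : ‖t i‖ * ‖t i‖ ≤ ‖t i‖ * ‖∑ j ∈ s, t j‖ := by
      calc ‖t i‖ * ‖t i‖ = ‖star (t i) * t i‖ := CStarRing.norm_star_mul_self.symm
        _ = ‖t i * ∑ j ∈ s, t j‖ := by rw [(hsa i hi).star_eq, hmul]

        _ ≤ ‖t i‖ * ‖∑ j ∈ s, t j‖ := norm_mul_le _ _
    exact le_of_mul_le_mul_left this hpos

end OrthSum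


set_option maxHeartbeats 2000000 in
/-- the left regular representation `Λ` of a Fell bundle
`Fb = {B_g}` over a discrete groupoid `G` on the right Hilbert
`C₀({B_x})`-module `L²(Fb)` (with `A0 = C₀({B_x})`, `e0` the embeddings of the
unit fibers into `A0`, `j_f : B_f → L²(Fb)` the canonical inclusions with dense
span, `innY` the `A0`-valued inner product, and
`Λ(b_f) j_g(c) = j_{fg}(b_f c)` if `s(f) = t(g)` and `0` otherwise) satisfies:
`Λ(b_f)` is adjointable with `Λ(b_f)* = Λ(b_f*)`, `‖Λ(b_f)‖ = ‖b_f‖`,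
`Λ(b_f)Λ(b_g) = Λ(b_f b_g)` when `s(f) = t(g)`, and `Λ(b_f)Λ(b_g) = 0` when
`s(f) ≠ t(g)`. -/
theorem statement12 {V : Type v} [Groupoid V] {E : Type u}
    [NonUnitalCStarAlgebra E] (Fb : FellBundle V E)
    {A0 : Type u'} [NonUnitalCStarAlgebra A0]
    (e0 : V → E →ₗ[ℂ] A0)
    (he0mul : ∀ (x : V) (a b : E), a ∈ Fb.fib (Mor.id x) → b ∈ Fb.fib (Mor.id x) →
      e0 x (a * b) = e0 x a * e0 x b)
    (he0star : ∀ (x : V) (a : E), a ∈ Fb.fib (Mor.id x) →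
      star (e0 x a) = e0 x (star a))
    (he0isom : ∀ (x : V) (a : E), a ∈ Fb.fib (Mor.id x) → ‖e0 x a‖ = ‖a‖)
    (he0orth : ∀ x y : V, x ≠ y → ∀ a b : E, a ∈ Fb.fib (Mor.id x) →
      b ∈ Fb.fib (Mor.id y) → e0 x a * e0 y b = 0)
    -- the Hilbert module `L²(Fb)`
    {Y : Type w} [NormedAddCommGroup Y] [NormedSpace ℂ Y] [CompleteSpace Y]
    (innY : Y → Y → A0)
    (hYadd : ∀ u v₁ v₂, innY u (v₁ + v₂) = innY u v₁ + innY u v₂)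
    (hYsmul : ∀ (c : ℂ) u v, innY u (c • v) = c • innY u v)
    (hYstar : ∀ u v, star (innY u v) = innY v u)
    (hYnorm : ∀ u, ‖u‖ ^ 2 = ‖innY u u‖)
    (hYdef : ∀ u, innY u u = 0 → u = 0)
    (hYcont : Continuous fun p : Y × Y => innY p.1 p.2)
    -- the canonical inclusions of the fibers
    (j : Mor V → E →ₗ[ℂ] Y)
    (hjinner : ∀ (f g : Mor V) (a b : E), a ∈ Fb.fib f → b ∈ Fb.fib g →
      innY (j f a) (j g b) = if f = g then e0 f.src (star a * b) else 0)
    (hjdense : Dense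
      (↑(Submodule.span ℂ (⋃ f : Mor V, j f '' (Fb.fib f : Set E))) : Set Y))
    -- the left regular representation
    (Λ : Mor V → E → (Y →L[ℂ] Y))
    (hΛ : ∀ (f : Mor V) (b : E), b ∈ Fb.fib f → ∀ (g : Mor V) (c : E),
      c ∈ Fb.fib g →
      Λ f b (j g c) = if h : g.tgt = f.src then j (f.comp g h) (b * c) else 0) :
    (∀ (f : Mor V) (b : E), b ∈ Fb.fib f →
      ∀ u v : Y, innY (Λ f b u) v = innY u (Λ f.inv (star b) v)) ∧
    (∀ (f : Mor V) (b : E), b ∈ Fb.fib f → ‖Λ f b‖ = ‖b‖) ∧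
    (∀ (f g : Mor V) (h : g.tgt = f.src) (b c : E), b ∈ Fb.fib f → c ∈ Fb.fib g →
      Λ f b ∘L Λ g c = Λ (f.comp g h) (b * c)) ∧
    (∀ f g : Mor V, g.tgt ≠ f.src → ∀ b c : E, b ∈ Fb.fib f → c ∈ Fb.fib g →
      Λ f b ∘L Λ g c = 0) := by
  classical
  -- basic innY lemmas
  have innY_zero_right : ∀ u : Y, innY u 0 = 0 := by
    intro u
    have h := hYadd u 0 0
    rw [add_zero] at h
    exact (add_eq_left.mp h.symm)
  have innY_add_left : ∀ u₁ u₂ v : Y, innY (u₁ + u₂) v = innY u₁ v + innY u₂ v := by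
    intro u₁ u₂ v
    rw [← hYstar v, hYadd, star_add, hYstar, hYstar]
  have innY_zero_left : ∀ v : Y, innY 0 v = 0 := by
    intro v; rw [← hYstar v, innY_zero_right, star_zero]
  have innY_smul_left : ∀ (a : ℂ) (u v : Y), innY (a • u) v = star a • innY u v := by
    intro a u v
    rw [← hYstar v, hYsmul, star_smul, hYstar]
  have innY_sum_right : ∀ (u : Y) (s : Finset (Mor V)) (vv : Mor V → Y),
      innY u (∑ i ∈ s, vv i) = ∑ i ∈ s, innY u (vv i) :=
    fun u s vv => map_sum (AddMonoidHom.mk' (innY u) (hYadd u)) vv s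
  have innY_sum_left : ∀ (v : Y) (s : Finset (Mor V)) (uu : Mor V → Y),
      innY (∑ i ∈ s, uu i) v = ∑ i ∈ s, innY (uu i) v :=
    fun v s uu =>
      map_sum (AddMonoidHom.mk' (fun u => innY u v) (fun a b => innY_add_left a b v)) uu s
  -- extension of equalities of continuous linear maps from the generators
  have clm_ext : ∀ T₁ T₂ : Y →L[ℂ] Y,
      (∀ (g : Mor V) (c : E), c ∈ Fb.fib g → T₁ (j g c) = T₂ (j g c)) → T₁ = T₂ := by
    intro T₁ T₂ hgen
    have hsp : ∀ y, y ∈ Submodule.span ℂ (⋃ f : Mor V, j f '' (Fb.fib f : Set E)) →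
        T₁ y = T₂ y := by
      intro y hy
      induction hy using Submodule.span_induction with
      | mem z hz =>
          obtain ⟨g, hk⟩ := Set.mem_iUnion.mp hz
          obtain ⟨d, hd, rfl⟩ := hk
          exact hgen g d hd
      | zero => simp
      | add a b _ _ iha ihb => rw [map_add, map_add, iha, ihb]
      | smul r a _ ih => rw [map_smul, map_smul, ih]
    have hEq : Set.EqOn ⇑T₁ ⇑T₂
        ↑(Submodule.span ℂ (⋃ f : Mor V, j f '' (Fb.fib f : Set E))) :=
      fun y hy => hsp y (SetLike.mem_coe.mp hy)
    exact ContinuousLinearMap.ext fun y =>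
      congrFun (Continuous.ext_on hjdense T₁.continuous T₂.continuous hEq) y
  -- Claim 3
  have claim3 : ∀ (f g : Mor V) (h : g.tgt = f.src) (b c : E), b ∈ Fb.fib f → c ∈ Fb.fib g →
      Λ f b ∘L Λ g c = Λ (f.comp g h) (b * c) := by
    intro f g h b c hb hc
    refine clm_ext _ _ fun k d hd => ?_
    rw [ContinuousLinearMap.comp_apply, hΛ g c hc k d hd]
    by_cases h₁ : k.tgt = g.src
    · rw [dif_pos h₁, hΛ f b hb _ _ (Fb.mul_mem g k h₁ hc hd),
        hΛ (f.comp g h) (b*c) (Fb.mul_mem f g h hb hc) k d hd,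
        dif_pos (show (g.comp k h₁).tgt = f.src from h),
        dif_pos (show k.tgt = (f.comp g h).src from h₁),
        MorAux.comp_assoc f g k h₁ h _ _, mul_assoc]
    · rw [dif_neg h₁, map_zero, hΛ (f.comp g h) (b*c) (Fb.mul_mem f g h hb hc) k d hd,
        dif_neg (show ¬ k.tgt = (f.comp g h).src from h₁)]
  -- Claim 4
  have claim4 : ∀ f g : Mor V, g.tgt ≠ f.src → ∀ b c : E, b ∈ Fb.fib f → c ∈ Fb.fib g →
      Λ f b ∘L Λ g c = 0 := by
    intro f g hne b c hb hc
    refine clm_ext _ _ fun k d hd => ?_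
    rw [ContinuousLinearMap.comp_apply, hΛ g c hc k d hd, ContinuousLinearMap.zero_apply]
    by_cases h₁ : k.tgt = g.src
    · rw [dif_pos h₁, hΛ f b hb _ _ (Fb.mul_mem g k h₁ hc hd),
        dif_neg (show ¬ (g.comp k h₁).tgt = f.src from hne)]
    · rw [dif_neg h₁, map_zero]
  -- Claim 1, generator identity
  have key1 : ∀ (f : Mor V) (b : E), b ∈ Fb.fib f →
      ∀ (g : Mor V) (c : E), c ∈ Fb.fib g → ∀ (k : Mor V) (d : E), d ∈ Fb.fib k →
      innY (Λ f b (j g c)) (j k d) = innY (j g c) (Λ f.inv (star b) (j k d)) := by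
    intro f b hb g c hc k d hd
    rw [hΛ f b hb g c hc, hΛ f.inv (star b) (Fb.star_mem f hb) k d hd]
    by_cases h₁ : g.tgt = f.src
    · rw [dif_pos h₁]
      by_cases h₂ : k.tgt = f.inv.src
      · rw [dif_pos h₂,
          hjinner _ _ _ _ (Fb.mul_mem f g h₁ hb hc) hd,
          hjinner _ _ _ _ hc (Fb.mul_mem f.inv k h₂ (Fb.star_mem f hb) hd)]
        by_cases h₃ : f.comp g h₁ = k
        · subst h₃
          rw [if_pos rfl, if_pos (MorAux.inv_comp_comp f g h₁ h₂).symm]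
          simp only [MorAux.comp_src]
          rw [star_mul, mul_assoc]
        · have h₄ : ¬ (g = f.inv.comp k h₂) := by
            intro hg
            subst hg
            exact h₃ (MorAux.comp_inv_comp f k h₂ h₁)
          rw [if_neg h₃, if_neg h₄]
      · rw [dif_neg h₂, innY_zero_right,
          hjinner _ _ _ _ (Fb.mul_mem f g h₁ hb hc) hd]
        refine if_neg fun he => h₂ ?_
        rw [← he]
        rfl
    · rw [dif_neg h₁, innY_zero_left]
      by_cases h₂ : k.tgt = f.inv.src
      · rw [dif_pos h₂,
          hjinner _ _ _ _ hc (Fb.mul_mem f.inv k h₂ (Fb.star_mem f hb) hd)]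
        refine (if_neg fun hg => h₁ ?_).symm
        rw [hg]
        rfl
      · rw [dif_neg h₂, innY_zero_right]
  -- Claim 1, extension to all of Y
  have claim1 : ∀ (f : Mor V) (b : E), b ∈ Fb.fib f →
      ∀ u v : Y, innY (Λ f b u) v = innY u (Λ f.inv (star b) v) := by
    intro f b hb
    have stepB : ∀ (g : Mor V) (c : E), c ∈ Fb.fib g → ∀ v : Y,
        innY (Λ f b (j g c)) v = innY (j g c) (Λ f.inv (star b) v) := by
      intro g c hc
      have hcont1 : Continuous fun v : Y => innY (Λ f b (j g c)) v :=
        hYcont.comp (continuous_const.prodMk continuous_id)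
      have hcont2 : Continuous fun v : Y => innY (j g c) (Λ f.inv (star b) v) :=
        hYcont.comp (continuous_const.prodMk (Λ f.inv (star b)).continuous)
      have hsp : ∀ v, v ∈ Submodule.span ℂ (⋃ f : Mor V, j f '' (Fb.fib f : Set E)) →
          innY (Λ f b (j g c)) v = innY (j g c) (Λ f.inv (star b) v) := by
        intro v hv
        induction hv using Submodule.span_induction with
        | mem z hz =>
            obtain ⟨k, hk⟩ := Set.mem_iUnion.mp hz
            obtain ⟨d, hd, rfl⟩ := hk
            exact key1 f b hb g c hc k d hd
        | zero => rw [map_zero, innY_zero_right, innY_zero_right]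
        | add a b' _ _ iha ihb' => rw [map_add, hYadd, hYadd, iha, ihb']
        | smul r a _ ih => rw [map_smul, hYsmul, hYsmul, ih]
      have hEq : Set.EqOn (fun v : Y => innY (Λ f b (j g c)) v)
          (fun v : Y => innY (j g c) (Λ f.inv (star b) v))
          ↑(Submodule.span ℂ (⋃ f : Mor V, j f '' (Fb.fib f : Set E))) :=
        fun v hv => hsp v (SetLike.mem_coe.mp hv)
      intro v
      exact congrFun (Continuous.ext_on hjdense hcont1 hcont2 hEq) v
    intro u v
    have hcont1 : Continuous fun u : Y => innY (Λ f b u) v :=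
      (hYcont.comp (continuous_id.prodMk continuous_const)).comp (Λ f b).continuous
    have hcont2 : Continuous fun u : Y => innY u (Λ f.inv (star b) v) :=
      hYcont.comp (continuous_id.prodMk continuous_const)
    have hsp : ∀ u, u ∈ Submodule.span ℂ (⋃ f : Mor V, j f '' (Fb.fib f : Set E)) →
        innY (Λ f b u) v = innY u (Λ f.inv (star b) v) := by
      intro u hu
      induction hu using Submodule.span_induction with
      | mem z hz =>
          obtain ⟨g, hk⟩ := Set.mem_iUnion.mp hz
          obtain ⟨c, hc, rfl⟩ := hk
          exact stepB g c hc v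
      | zero => rw [map_zero, innY_zero_left, innY_zero_left]
      | add a b' _ _ iha ihb' => rw [map_add, innY_add_left, innY_add_left, iha, ihb']
      | smul r a _ ih => rw [map_smul, innY_smul_left, innY_smul_left, ih]
    have hEq : Set.EqOn (fun u : Y => innY (Λ f b u) v)
        (fun u : Y => innY u (Λ f.inv (star b) v))
        ↑(Submodule.span ℂ (⋃ f : Mor V, j f '' (Fb.fib f : Set E))) :=
      fun u hu => hsp u (SetLike.mem_coe.mp hu)
    exact congrFun (Continuous.ext_on hjdense hcont1 hcont2 hEq) u
  -- span representation
  have span_rep : ∀ u ∈ Submodule.span ℂ (⋃ f : Mor V, j f '' (Fb.fib f : Set E)),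
      ∃ (s : Finset (Mor V)) (c : Mor V → E), (∀ g : Mor V, c g ∈ Fb.fib g) ∧
        u = ∑ g ∈ s, j g (c g) := by
    intro u hu
    induction hu using Submodule.span_induction with
    | mem z hz =>
        obtain ⟨g0, hk⟩ := Set.mem_iUnion.mp hz
        obtain ⟨a, ha, rfl⟩ := hk
        refine ⟨{g0}, fun g => if g = g0 then a else 0, fun g => ?_, by simp⟩
        show (if g = g0 then a else 0) ∈ Fb.fib g
        split_ifs with h
        · rw [h]; exact ha
        · exact zero_mem _
    | zero => exact ⟨∅, fun _ => 0, fun g => zero_mem _, by simp⟩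
    | add x y hx hy ihx ihy =>
        obtain ⟨s₁, c₁, m₁, rfl⟩ := ihx
        obtain ⟨s₂, c₂, m₂, rfl⟩ := ihy
        have e : ∀ (s' : Finset (Mor V)), s' ⊆ s₁ ∪ s₂ → ∀ (c' : Mor V → E),
            ∑ g ∈ s₁ ∪ s₂, j g (if g ∈ s' then c' g else 0) = ∑ g ∈ s', j g (c' g) := by
          intro s' hs' c'
          calc ∑ g ∈ s₁ ∪ s₂, j g (if g ∈ s' then c' g else 0)
              = ∑ g ∈ s₁ ∪ s₂, (if g ∈ s' then j g (c' g) else 0) :=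
                Finset.sum_congr rfl fun g _ => by split <;> simp
            _ = ∑ g ∈ s', j g (c' g) := by
                rw [Finset.sum_ite_mem, Finset.inter_eq_right.mpr hs']
        refine ⟨s₁ ∪ s₂,
          fun g => (if g ∈ s₁ then c₁ g else 0) + (if g ∈ s₂ then c₂ g else 0),
          fun g => add_mem (by split_ifs with h; exacts [m₁ g, zero_mem _])
                   (by split_ifs with h; exacts [m₂ g, zero_mem _]), ?_⟩
        simp only [map_add]
        rw [Finset.sum_add_distrib, e s₁ Finset.subset_union_left c₁,
          e s₂ Finset.subset_union_right c₂]
    | smul r x hx ihx =>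
        obtain ⟨s, c, m, rfl⟩ := ihx
        exact ⟨s, fun g => r • c g, fun g => Submodule.smul_mem _ _ (m g),
          by rw [Finset.smul_sum]
             exact Finset.sum_congr rfl fun g _ => (map_smul (j g) r (c g)).symm⟩
  -- diagonal fiber membership
  have e0_fib_mem : ∀ (g : Mor V) (z : E), z ∈ Fb.fib g →
      star z * z ∈ Fb.fib (Mor.id g.src) := by
    intro g z hz
    have h := Fb.mul_mem g.inv g rfl (Fb.star_mem g hz) hz
    exact MorAux.inv_comp g _ ▸ h
  -- grouping sums of diagonal elements by their object
  have group_sum : ∀ (s : Finset (Mor V)) (dd : Mor V → E),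
      ∑ g ∈ s, e0 g.src (dd g)
        = ∑ x ∈ s.image Mor.src, e0 x (∑ g ∈ s.filter (fun g => g.src = x), dd g) := by
    intro s dd
    rw [← Finset.sum_fiberwise_of_maps_to (g := Mor.src)
      (fun g hg => Finset.mem_image_of_mem Mor.src hg) (fun g => e0 g.src (dd g))]
    refine Finset.sum_congr rfl fun x hx => ?_
    rw [map_sum]
    exact Finset.sum_congr rfl fun g hg => by rw [(Finset.mem_filter.mp hg).2]
  have sumfib_mem : ∀ (s : Finset (Mor V)) (dd : Mor V → E),
      (∀ g, dd g ∈ Fb.fib (Mor.id g.src)) → ∀ (x : V),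
      (∑ g ∈ s.filter (fun g => g.src = x), dd g) ∈ Fb.fib (Mor.id x) := by
    intro s dd hdd x
    refine Submodule.sum_mem _ fun g hg => ?_
    have h := hdd g
    rwa [(Finset.mem_filter.mp hg).2] at h
  have sumfib_sa : ∀ (s : Finset (Mor V)) (dd : Mor V → E),
      (∀ g, IsSelfAdjoint (dd g)) → ∀ (x : V),
      IsSelfAdjoint (∑ g ∈ s.filter (fun g => g.src = x), dd g) := by
    intro s dd hsa x
    rw [IsSelfAdjoint, star_sum]
    exact Finset.sum_congr rfl fun g _ => (hsa g).star_eq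
  have norm_e0_sum_le : ∀ (s : Finset (Mor V)) (dd : Mor V → E),
      (∀ g, dd g ∈ Fb.fib (Mor.id g.src)) → (∀ g, IsSelfAdjoint (dd g)) →
      ∀ (M : ℝ), 0 ≤ M →
      (∀ x ∈ s.image Mor.src, ‖∑ g ∈ s.filter (fun g => g.src = x), dd g‖ ≤ M) →
      ‖∑ g ∈ s, e0 g.src (dd g)‖ ≤ M := by
    intro s dd hdd hsa M hM hb
    rw [group_sum s dd]
    refine norm_orth_sum_le _ _ ?_ ?_ hM ?_
    · intro x hx
      rw [IsSelfAdjoint, he0star x _ (sumfib_mem s dd hdd x), (sumfib_sa s dd hsa x).star_eq]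
    · intro x hx y hy hxy
      exact he0orth x y hxy _ _ (sumfib_mem s dd hdd x) (sumfib_mem s dd hdd y)
    · intro x hx
      rw [he0isom x _ (sumfib_mem s dd hdd x)]
      exact hb x hx
  have norm_e0_sum_ge : ∀ (s : Finset (Mor V)) (dd : Mor V → E),
      (∀ g, dd g ∈ Fb.fib (Mor.id g.src)) → (∀ g, IsSelfAdjoint (dd g)) →
      ∀ x ∈ s.image Mor.src,
      ‖∑ g ∈ s.filter (fun g => g.src = x), dd g‖ ≤ ‖∑ g ∈ s, e0 g.src (dd g)‖ := by
    intro s dd hdd hsa x hx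
    rw [group_sum s dd, ← he0isom x _ (sumfib_mem s dd hdd x)]
    refine norm_le_norm_orth_sum (s.image Mor.src)
      (fun y => e0 y (∑ g ∈ s.filter (fun g => g.src = y), dd g)) ?_ ?_ hx
    · intro y hy
      rw [IsSelfAdjoint, he0star y _ (sumfib_mem s dd hdd y), (sumfib_sa s dd hsa y).star_eq]
    · intro y hy z hz hyz
      exact he0orth y z hyz _ _ (sumfib_mem s dd hdd y) (sumfib_mem s dd hdd z)
  -- the main norm bound on the dense span
  have norm_bound : ∀ (f : Mor V) (b : E), b ∈ Fb.fib f →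
      ∀ (s : Finset (Mor V)) (c : Mor V → E), (∀ g : Mor V, c g ∈ Fb.fib g) →
      ‖Λ f b (∑ g ∈ s, j g (c g))‖ ≤ ‖b‖ * ‖∑ g ∈ s, j g (c g)‖ := by
    intro f b hb s c hc
    set u : Y := ∑ g ∈ s, j g (c g) with hu
    set d : Mor V → E := fun g => star (c g) * c g with hd
    set d' : Mor V → E :=
      fun g => if g.tgt = f.src then star (b * c g) * (b * c g) else 0 with hd'
    have hd_mem : ∀ g, d g ∈ Fb.fib (Mor.id g.src) := fun g => e0_fib_mem g (c g) (hc g)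
    have hd'_mem : ∀ g, d' g ∈ Fb.fib (Mor.id g.src) := by
      intro g
      simp only [hd']
      split
      · next h => exact e0_fib_mem (f.comp g h) (b * c g) (Fb.mul_mem f g h hb (hc g))
      · exact zero_mem _
    have hd_sa : ∀ g, IsSelfAdjoint (d g) := fun g => IsSelfAdjoint.star_mul_self (c g)
    have hd'_sa : ∀ g, IsSelfAdjoint (d' g) := by
      intro g
      simp only [hd']
      split
      · exact IsSelfAdjoint.star_mul_self _
      · exact (IsSelfAdjoint.zero E)
    have hinn_u : innY u u = ∑ g ∈ s, e0 g.src (d g) := by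
      rw [hu, innY_sum_left]
      refine Finset.sum_congr rfl fun g hg => ?_
      rw [innY_sum_right]
      refine (Finset.sum_eq_single g (fun h' hh' hne => ?_) (fun h => (h hg).elim)).trans ?_
      · rw [hjinner _ _ _ _ (hc g) (hc h'), if_neg (fun e => hne e.symm)]
      · rw [hjinner _ _ _ _ (hc g) (hc g), if_pos rfl]
    have hΛu : Λ f b u = ∑ g ∈ s,
        (if h : g.tgt = f.src then j (f.comp g h) (b * c g) else 0) := by
      rw [hu, map_sum]
      exact Finset.sum_congr rfl fun g _ => hΛ f b hb g (c g) (hc g)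
    have hinn_Λu : innY (Λ f b u) (Λ f b u) = ∑ g ∈ s, e0 g.src (d' g) := by
      rw [hΛu, innY_sum_left]
      refine Finset.sum_congr rfl fun g hg => ?_
      rw [innY_sum_right]
      refine (Finset.sum_eq_single g (fun h' hh' hne => ?_) (fun h => (h hg).elim)).trans ?_
      · by_cases h₁ : g.tgt = f.src
        · by_cases h₂ : h'.tgt = f.src
          · rw [dif_pos h₁, dif_pos h₂,
              hjinner _ _ _ _ (Fb.mul_mem f g h₁ hb (hc g)) (Fb.mul_mem f h' h₂ hb (hc h')),
              if_neg (fun e => hne (MorAux.comp_left_cancel h₁ h₂ e).symm)]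
          · rw [dif_neg h₂, innY_zero_right]
        · rw [dif_neg h₁, innY_zero_left]
      · by_cases h₁ : g.tgt = f.src
        · rw [dif_pos h₁,
            hjinner _ _ _ _ (Fb.mul_mem f g h₁ hb (hc g)) (Fb.mul_mem f g h₁ hb (hc g)),
            if_pos rfl]
          simp only [hd']
          rw [if_pos h₁]
          rfl
        · rw [dif_neg h₁, innY_zero_left]
          simp only [hd']
          rw [if_neg h₁, map_zero]
    have hcmp : ∀ x : V,
        ‖∑ g ∈ s.filter (fun g => g.src = x), d' g‖
          ≤ ‖b‖^2 * ‖∑ g ∈ s.filter (fun g => g.src = x), d g‖ := by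
      intro x
      set ι := Unitization.inrNonUnitalStarAlgHom ℂ E with hι
      have ιnorm : ∀ a : E, ‖ι a‖ = ‖a‖ := fun a => Unitization.norm_inr a
      have h0 : (0 : Unitization ℂ E) ≤ ι (∑ g ∈ s.filter (fun g => g.src = x), d' g) := by
        rw [map_sum]
        refine Finset.sum_nonneg fun g hg => ?_
        simp only [hd']
        split
        · rw [map_mul, map_star]
          exact star_mul_self_nonneg _
        · rw [map_zero]
      have hle : ι (∑ g ∈ s.filter (fun g => g.src = x), d' g)
          ≤ ‖b‖^2 • ι (∑ g ∈ s.filter (fun g => g.src = x), d g) := by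
        rw [map_sum, map_sum, Finset.smul_sum]
        refine Finset.sum_le_sum fun g hg => ?_
        simp only [hd', hd]
        split
        · have e1 : ι (star (b * c g) * (b * c g))
              = star (ι (c g)) * (star (ι b) * ι b) * ι (c g) := by
            simp only [map_mul, map_star, star_mul]
            simp [mul_assoc]
          rw [e1]
          calc star (ι (c g)) * (star (ι b) * ι b) * ι (c g)
              ≤ ‖star (ι b) * ι b‖ • (star (ι (c g)) * ι (c g)) :=
                CStarAlgebra.star_left_conjugate_le_norm_smul (IsSelfAdjoint.star_mul_self _)
            _ = ‖b‖^2 • ι (star (c g) * c g) := by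
                rw [CStarRing.norm_star_mul_self, ιnorm, map_mul, map_star, pow_two]
        · rw [map_zero]
          refine smul_nonneg (by positivity) ?_
          rw [map_mul, map_star]
          exact star_mul_self_nonneg _
      calc ‖∑ g ∈ s.filter (fun g => g.src = x), d' g‖
          = ‖ι (∑ g ∈ s.filter (fun g => g.src = x), d' g)‖ := (ιnorm _).symm
        _ ≤ ‖‖b‖^2 • ι (∑ g ∈ s.filter (fun g => g.src = x), d g)‖ :=
            CStarAlgebra.norm_le_norm_of_nonneg_of_le h0 hle
        _ = ‖b‖^2 * ‖∑ g ∈ s.filter (fun g => g.src = x), d g‖ := by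
            rw [norm_smul, Real.norm_eq_abs, abs_of_nonneg (by positivity), ιnorm]
    have husq : ‖u‖^2 = ‖∑ g ∈ s, e0 g.src (d g)‖ := by rw [hYnorm, hinn_u]
    have hfinal : ‖Λ f b u‖^2 ≤ ‖b‖^2 * ‖u‖^2 := by
      rw [hYnorm, hinn_Λu]
      refine norm_e0_sum_le s d' hd'_mem hd'_sa (‖b‖^2 * ‖u‖^2) (by positivity) ?_
      intro x hx
      refine (hcmp x).trans (mul_le_mul_of_nonneg_left ?_ (by positivity))
      rw [husq]
      exact norm_e0_sum_ge s d hd_mem hd_sa x hx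
    refine le_of_pow_le_pow_left₀ two_ne_zero (by positivity) ?_
    rw [mul_pow]
    exact hfinal
  -- Claim 2
  have claim2 : ∀ (f : Mor V) (b : E), b ∈ Fb.fib f → ‖Λ f b‖ = ‖b‖ := by
    intro f b hb
    by_cases hb0 : b = 0
    · subst hb0
      have hz : Λ f (0:E) = 0 := by
        refine clm_ext _ _ fun g c hc => ?_
        rw [hΛ f 0 (zero_mem _) g c hc, ContinuousLinearMap.zero_apply]
        split
        · rw [zero_mul, map_zero]
        · rfl
      rw [hz, norm_zero, norm_zero]
    · have upper : ∀ u : Y, ‖Λ f b u‖ ≤ ‖b‖ * ‖u‖ := by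
        have hclosed : IsClosed {u : Y | ‖Λ f b u‖ ≤ ‖b‖ * ‖u‖} :=
          isClosed_le ((Λ f b).continuous.norm) (continuous_const.mul continuous_norm)
        have hsub : ↑(Submodule.span ℂ (⋃ f : Mor V, j f '' (Fb.fib f : Set E))) ⊆
            {u : Y | ‖Λ f b u‖ ≤ ‖b‖ * ‖u‖} := by
          intro u hu
          obtain ⟨s, c, hc, rfl⟩ := span_rep u (SetLike.mem_coe.mp hu)
          exact norm_bound f b hb s c hc
        intro u
        exact closure_minimal hsub hclosed (hjdense u)
      have hup : ‖Λ f b‖ ≤ ‖b‖ := ContinuousLinearMap.opNorm_le_bound _ (norm_nonneg b) upper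
      have hbpos : 0 < ‖b‖ := norm_pos_iff.mpr hb0
      have hmem0 : b * star b ∈ Fb.fib (Mor.id f.tgt) := by
        have h := Fb.mul_mem f f.inv rfl hb (Fb.star_mem f hb)
        exact MorAux.comp_inv f _ ▸ h
      have hu₀norm : ‖j f.inv (star b)‖ = ‖b‖ := by
        have h1 : ‖j f.inv (star b)‖^2 = ‖b‖^2 := by
          rw [hYnorm, hjinner _ _ _ _ (Fb.star_mem f hb) (Fb.star_mem f hb), if_pos rfl,
            star_star]
          simp only [MorAux.inv_src]
          rw [he0isom f.tgt _ hmem0, CStarRing.norm_self_mul_star, ← pow_two]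
        exact le_antisymm
          (le_of_pow_le_pow_left₀ two_ne_zero (norm_nonneg b) h1.le)
          (le_of_pow_le_pow_left₀ two_ne_zero (norm_nonneg _) h1.ge)
      have hΛu₀ : Λ f b (j f.inv (star b)) = j (Mor.id f.tgt) (b * star b) := by
        rw [hΛ f b hb f.inv (star b) (Fb.star_mem f hb),
          dif_pos (show f.inv.tgt = f.src from rfl), MorAux.comp_inv]
      have hmm : star (b * star b) * (b * star b) ∈ Fb.fib (Mor.id f.tgt) :=
        e0_fib_mem (Mor.id f.tgt) (b * star b) hmem0
      have hΛu₀norm : ‖Λ f b (j f.inv (star b))‖ = ‖b‖^2 := by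
        have h1 : ‖Λ f b (j f.inv (star b))‖^2 = (‖b‖^2)^2 := by
          rw [hYnorm, hΛu₀, hjinner _ _ _ _ hmem0 hmem0, if_pos rfl]
          simp only [MorAux.id_src]
          rw [he0isom f.tgt _ hmm, CStarRing.norm_star_mul_self,
            CStarRing.norm_self_mul_star, ← pow_two, ← pow_two]
        exact le_antisymm
          (le_of_pow_le_pow_left₀ two_ne_zero (by positivity) h1.le)
          (le_of_pow_le_pow_left₀ two_ne_zero (norm_nonneg _) h1.ge)
      have hlow : ‖b‖ ≤ ‖Λ f b‖ := by
        have h2 : ‖Λ f b (j f.inv (star b))‖ ≤ ‖Λ f b‖ * ‖j f.inv (star b)‖ :=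
          (Λ f b).le_opNorm _
        rw [hΛu₀norm, hu₀norm, pow_two] at h2
        exact le_of_mul_le_mul_right h2 hbpos
      exact le_antisymm hup hlow
  exact ⟨claim1, claim2, claim3, claim4⟩
end

section
/- Let B be a C*-algebra with closed linear subspaces {B_g}_{g ∈ G(-,-)} indexed by the morphisms of a discrete groupoid G satisfying: B_f B_g ⊆ B_{fg} when s(f) = t(g) and B_f B_g = 0 otherwise, B_g* = B_{g⁻¹}, and Σ_g B_g dense in B. If there is a bounded linear map F : B → span-closure{B_{1_x} : x ∈ ob(G)} restricting to the identity on that subspace and vanishing on B_g for every non-identity g, then F is a conditional expectation and the subspaces {B_g} are linearly independent (so they form a G-grading of B). -/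
open CategoryTheory

universe v u

namespace Mor

variable {V : Type v} [Groupoid V]

/-- `f` is an identity morphism. -/
def IsId (f : Mor V) : Prop := ∃ x : V, f = Mor.id x

end Mor

namespace MyAux14

variable {V : Type v} [Groupoid V]

lemma inv_comp_self (g : Mor V) : g.inv.comp g rfl = Mor.id g.src := by
  obtain ⟨gs, gt, gf⟩ := g
  simp [Mor.comp, Mor.inv, Mor.id, Mor.src, Mor.tgt, Mor.hom]
  show (Sigma.mk gs (Sigma.mk gs _) : Σ (x : V) (y : V), x ⟶ y) = Sigma.mk gs (Sigma.mk gs (𝟙 gs))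
  exact congrArg (fun k : gs ⟶ gs => (Sigma.mk gs (Sigma.mk gs k) : Σ (x : V) (y : V), x ⟶ y)) (show gf ≫ eqToHom (rfl : gt = gt) ≫ inv gf = 𝟙 gs by simp)

lemma not_isId_inv_comp {g h : Mor V} (hT : h.tgt = g.tgt) (hne : g ≠ h) :
    ¬ (g.inv.comp h hT).IsId := by
  obtain ⟨gs, gt, gf⟩ := g
  obtain ⟨hs, ht, hf⟩ := h
  dsimp [Mor.tgt] at hT
  subst hT
  rintro ⟨x, hx⟩
  dsimp [Mor.comp, Mor.inv, Mor.id, Mor.src, Mor.tgt, Mor.hom] at hx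
  injection hx with h1 h2
  subst h1
  injection h2 with h3 h4
  subst h3
  have h5 := eq_of_heq h4
  simp only [eqToHom_refl, Category.id_comp] at h5
  apply hne
  have : hf = gf := by
    have := congrArg (· ≫ gf) h5
    simpa [Category.assoc, Groupoid.inv_comp] using this
  subst this
  rfl

lemma id_comp' (x : V) (g : Mor V) (h : g.tgt = x) :
    (Mor.id x).comp g h = g := by
  obtain ⟨gs, gt, gf⟩ := g
  dsimp [Mor.tgt] at h
  subst h
  simp [Mor.comp, Mor.id, Mor.src, Mor.tgt, Mor.hom]
  rfl

lemma comp_id' (x : V) (g : Mor V) (h : x = g.src) :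
    g.comp (Mor.id x) h = g := by
  obtain ⟨gs, gt, gf⟩ := g
  dsimp [Mor.src] at h
  subst h
  simp [Mor.comp, Mor.id, Mor.src, Mor.tgt, Mor.hom]
  rfl

lemma inv_id (x : V) : (Mor.id x).inv = Mor.id x := by
  simp [Mor.inv, Mor.id, Mor.src, Mor.tgt, Mor.hom]
  rfl

lemma inv_inv (f : Mor V) : f.inv.inv = f := by
  obtain ⟨a, b, g⟩ := f
  simp [Mor.inv, Mor.src, Mor.tgt, Mor.hom, Groupoid.inv_eq_inv]
  rfl

lemma isId_inv {f : Mor V} (h : f.inv.IsId) : f.IsId := by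
  obtain ⟨x, hx⟩ := h
  exact ⟨x, by rw [← inv_inv f, hx, inv_id]⟩

end MyAux14

variable {V : Type v} [Groupoid V] {B : Type u}

/-- The closed span of the unit fibers of a family of subspaces indexed by the
morphisms of a groupoid. -/
def diag [NonUnitalCStarAlgebra B] (Bg : Mor V → Submodule ℂ B) : Set B :=
  closure (↑(Submodule.span ℂ (⋃ x : V, (Bg (Mor.id x) : Set B))) : Set B)

namespace MyAux14

variable [NonUnitalCStarAlgebra B] [PartialOrder B] [StarOrderedRing B]
  (Bg : Mor V → Submodule ℂ B)

lemma mem_diag_of_id {x : V} {b : B} (hb : b ∈ Bg (Mor.id x)) : b ∈ diag Bg :=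
  subset_closure (Submodule.subset_span (Set.mem_iUnion.mpr ⟨x, hb⟩))

lemma isClosed_diag : IsClosed (diag Bg) := isClosed_closure

lemma diag_zero : (0 : B) ∈ diag Bg :=
  subset_closure (Submodule.zero_mem _)

lemma diag_eq_coe : diag Bg =
    ↑(Submodule.span ℂ (⋃ x : V, (Bg (Mor.id x) : Set B))).topologicalClosure :=
  (Submodule.topologicalClosure_coe _).symm

lemma diag_add {x y : B} (hx : x ∈ diag Bg) (hy : y ∈ diag Bg) :
    x + y ∈ diag Bg := by
  rw [diag_eq_coe] at hx hy ⊢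
  exact Submodule.add_mem _ hx hy

lemma diag_smul (c : ℂ) {x : B} (hx : x ∈ diag Bg) : c • x ∈ diag Bg := by
  rw [diag_eq_coe] at hx ⊢
  exact Submodule.smul_mem _ c hx

lemma dense_induction
    (hdense : Dense (↑(Submodule.span ℂ (⋃ f : Mor V, (Bg f : Set B))) : Set B))
    (S : Set B) (hS : IsClosed S) (h0 : (0 : B) ∈ S)
    (hadd : ∀ x y, x ∈ S → y ∈ S → x + y ∈ S)
    (hsmul : ∀ (c : ℂ) x, x ∈ S → c • x ∈ S)
    (hgen : ∀ (f : Mor V), ∀ b ∈ Bg f, b ∈ S) : ∀ b : B, b ∈ S := by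
  have h1 : (↑(Submodule.span ℂ (⋃ f : Mor V, (Bg f : Set B))) : Set B) ⊆ S := by
    intro x hx
    refine Submodule.span_induction (fun x hx => ?_) h0 (fun x y _ _ => hadd x y)
      (fun c x _ => hsmul c x) hx
    obtain ⟨_, ⟨f, rfl⟩, hf⟩ := hx
    exact hgen f x hf
  intro b
  have h2 := closure_minimal h1 hS
  rw [hdense.closure_eq] at h2
  exact h2 trivial

lemma diag_induction (S : Set B) (hS : IsClosed S) (h0 : (0 : B) ∈ S)
    (hadd : ∀ x y, x ∈ S → y ∈ S → x + y ∈ S)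
    (hsmul : ∀ (c : ℂ) x, x ∈ S → c • x ∈ S)
    (hgen : ∀ (x : V), ∀ b ∈ Bg (Mor.id x), b ∈ S) : ∀ b ∈ diag Bg, b ∈ S := by
  have h1 : (↑(Submodule.span ℂ (⋃ x : V, (Bg (Mor.id x) : Set B))) : Set B) ⊆ S := by
    intro x hx
    refine Submodule.span_induction (fun x hx => ?_) h0 (fun x y _ _ => hadd x y)
      (fun c x _ => hsmul c x) hx
    obtain ⟨_, ⟨f, rfl⟩, hf⟩ := hx
    exact hgen f x hf
  exact fun b hb => closure_minimal h1 hS hb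

lemma span_rep {c : B} (hc : c ∈ Submodule.span ℂ (⋃ f : Mor V, (Bg f : Set B))) :
    ∃ d : Mor V →₀ B, (∀ f, d f ∈ Bg f) ∧ ∑ f ∈ d.support, d f = c := by
  have hspan : Submodule.span ℂ (⋃ f : Mor V, (Bg f : Set B)) = ⨆ f, Bg f := by
    rw [Submodule.span_iUnion]
    simp [Submodule.span_eq]
  rw [hspan, Submodule.mem_iSup_iff_exists_finsupp] at hc
  obtain ⟨d, hd, hsum⟩ := hc
  exact ⟨d, hd, hsum⟩

section

variable
    (hmul : ∀ (f g : Mor V) (h : g.tgt = f.src) ⦃a b : B⦄,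
      a ∈ Bg f → b ∈ Bg g → a * b ∈ Bg (f.comp g h))
    (hzero : ∀ f g : Mor V, g.tgt ≠ f.src →
      ∀ ⦃a b : B⦄, a ∈ Bg f → b ∈ Bg g → a * b = 0)
    (hstar : ∀ (f : Mor V) ⦃a : B⦄, a ∈ Bg f → star a ∈ Bg f.inv)
    (hdense : Dense (↑(Submodule.span ℂ (⋃ f : Mor V, (Bg f : Set B))) : Set B))
    (F : B →L[ℂ] B)
    (hFrange : ∀ b : B, F b ∈ diag Bg)
    (hFid : ∀ b ∈ diag Bg, F b = b)
    (hF0 : ∀ f : Mor V, ¬ f.IsId → ∀ b ∈ Bg f, F b = 0)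

include hmul hzero hstar hFid hF0 in
lemma F_star_mul_sum (s : Finset (Mor V)) (b : Mor V → B)
    (hb : ∀ f ∈ s, b f ∈ Bg f) {g : Mor V} (hg : g ∈ s) :
    (∑ h ∈ s, F (star (b g) * b h)) = star (b g) * b g := by
  rw [Finset.sum_eq_single_of_mem g hg]
  · have mem := hmul g.inv g rfl (hstar g (hb g hg)) (hb g hg)
    rw [inv_comp_self] at mem
    exact hFid _ (mem_diag_of_id Bg mem)
  · intro h hh hne
    by_cases hT : h.tgt = g.tgt
    · have mem := hmul g.inv h hT (hstar g (hb g hg)) (hb h hh)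
      exact hF0 _ (not_isId_inv_comp hT (Ne.symm hne)) _ mem
    · rw [hzero g.inv h hT (hstar g (hb g hg)) (hb h hh), map_zero]

include hmul hzero hstar hdense hFid hF0 in
lemma F_pos_on : ∀ c : B, 0 ≤ F (star c * c) := by
  have key : ∀ c ∈ Submodule.span ℂ (⋃ f : Mor V, (Bg f : Set B)),
      0 ≤ F (star c * c) := by
    intro c hc
    obtain ⟨d, hd, rfl⟩ := span_rep Bg hc
    have h1 : F (star (∑ f ∈ d.support, d f) * ∑ f ∈ d.support, d f)
        = ∑ g ∈ d.support, ∑ h ∈ d.support, F (star (d g) * d h) := by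
      rw [star_sum, Finset.sum_mul_sum, map_sum]
      exact Finset.sum_congr rfl fun g _ => map_sum F _ _
    rw [h1]
    have h2 : ∀ g ∈ d.support, ∑ h ∈ d.support, F (star (d g) * d h)
        = star (d g) * d g := fun g hg =>
      F_star_mul_sum Bg hmul hzero hstar F hFid hF0 d.support d (fun f _ => hd f) hg
    rw [Finset.sum_congr rfl h2]
    exact Finset.sum_nonneg fun g _ => star_mul_self_nonneg (d g)
  have hcont : Continuous fun c : B => F (star c * c) :=
    F.continuous.comp (continuous_star.mul continuous_id)
  have hcl : IsClosed {c : B | 0 ≤ F (star c * c)} :=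
    CStarAlgebra.isClosed_nonneg.preimage hcont
  intro c
  have h2 := closure_minimal (fun x hx => key x hx) hcl
  rw [hdense.closure_eq] at h2
  exact h2 (trivial : c ∈ Set.univ)

include hstar hdense hFid hF0 in
lemma F_star : ∀ b : B, F (star b) = star (F b) := by
  refine dense_induction Bg hdense {b : B | F (star b) = star (F b)}
    (isClosed_eq (F.continuous.comp continuous_star) (continuous_star.comp F.continuous))
    (by simp) (fun x y hx hy => ?_) (fun c x hx => ?_) (fun f b hb => ?_)
  · simp only [Set.mem_setOf_eq] at *
    rw [star_add, map_add, hx, hy, map_add, star_add]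
  · simp only [Set.mem_setOf_eq] at *
    rw [star_smul, map_smul, hx, map_smul, star_smul]
  · simp only [Set.mem_setOf_eq]
    by_cases hId : f.IsId
    · obtain ⟨x, rfl⟩ := hId
      have hb' : star b ∈ Bg (Mor.id x) := by
        have := hstar (Mor.id x) hb
        rwa [inv_id] at this
      rw [hFid _ (mem_diag_of_id Bg hb'), hFid _ (mem_diag_of_id Bg hb)]
    · rw [hF0 f.inv (fun h => hId (isId_inv h)) _ (hstar f hb), hF0 f hId b hb, star_zero]

include hmul hzero hFid hF0 in
lemma bimod_fiber (x : V) {a : B} (ha : a ∈ Bg (Mor.id x)) (g : Mor V) {b : B}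
    (hb : b ∈ Bg g) : F (a * b) = a * F b ∧ F (b * a) = F b * a := by
  constructor
  · by_cases hT : g.tgt = x
    · have mem : a * b ∈ Bg g := by
        have := hmul (Mor.id x) g hT ha hb
        rwa [id_comp' x g hT] at this
      by_cases hId : g.IsId
      · obtain ⟨y, rfl⟩ := hId
        rw [hFid _ (mem_diag_of_id Bg mem), hFid _ (mem_diag_of_id Bg hb)]
      · rw [hF0 g hId _ mem, hF0 g hId b hb, mul_zero]
    · have h0 : a * b = 0 := hzero (Mor.id x) g hT ha hb
      rw [h0, map_zero]
      by_cases hId : g.IsId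
      · obtain ⟨y, rfl⟩ := hId
        rw [hFid _ (mem_diag_of_id Bg hb), ← h0]
      · rw [hF0 g hId b hb, mul_zero]
  · by_cases hT : x = g.src
    · have mem : b * a ∈ Bg g := by
        have := hmul g (Mor.id x) hT hb ha
        rwa [comp_id' x g hT] at this
      by_cases hId : g.IsId
      · obtain ⟨y, rfl⟩ := hId
        rw [hFid _ (mem_diag_of_id Bg mem), hFid _ (mem_diag_of_id Bg hb)]
      · rw [hF0 g hId _ mem, hF0 g hId b hb, zero_mul]
    · have h0 : b * a = 0 := hzero g (Mor.id x) (fun h => hT h) hb ha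
      rw [h0, map_zero]
      by_cases hId : g.IsId
      · obtain ⟨y, rfl⟩ := hId
        rw [hFid _ (mem_diag_of_id Bg hb), ← h0]
      · rw [hF0 g hId b hb, zero_mul]

include hmul hzero hdense hFid hF0 in
lemma bimod_left : ∀ b : B, ∀ a ∈ diag Bg, F (a * b) = a * F b := by
  have stepA : ∀ (x : V), ∀ a ∈ Bg (Mor.id x), ∀ b : B, F (a * b) = a * F b := by
    intro x a ha
    have := dense_induction Bg hdense {b : B | F (a * b) = a * F b}
      (isClosed_eq (F.continuous.comp (continuous_const.mul continuous_id))
        (continuous_const.mul F.continuous))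
      (by simp) (fun u v hu hv => ?_) (fun c u hu => ?_) (fun g b hb => ?_)
    · exact this
    · simp only [Set.mem_setOf_eq] at *
      rw [mul_add, map_add, hu, hv, map_add, mul_add]
    · simp only [Set.mem_setOf_eq] at *
      rw [mul_smul_comm, map_smul, hu, map_smul, mul_smul_comm]
    · exact (bimod_fiber Bg hmul hzero F hFid hF0 x ha g hb).1
  intro b
  refine diag_induction Bg {a : B | F (a * b) = a * F b}
    (isClosed_eq (F.continuous.comp (continuous_id.mul continuous_const))
      (continuous_id.mul continuous_const))
    (by simp) (fun u v hu hv => ?_) (fun c u hu => ?_) (fun x a ha => stepA x a ha b)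
  · simp only [Set.mem_setOf_eq] at *
    rw [add_mul, map_add, hu, hv, add_mul]
  · simp only [Set.mem_setOf_eq] at *
    rw [smul_mul_assoc, map_smul, hu, smul_mul_assoc]

include hmul hzero hdense hFid hF0 in
lemma bimod_right : ∀ b : B, ∀ a ∈ diag Bg, F (b * a) = F b * a := by
  have stepA : ∀ (x : V), ∀ a ∈ Bg (Mor.id x), ∀ b : B, F (b * a) = F b * a := by
    intro x a ha
    have := dense_induction Bg hdense {b : B | F (b * a) = F b * a}
      (isClosed_eq (F.continuous.comp (continuous_id.mul continuous_const))
        (F.continuous.mul continuous_const))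
      (by simp) (fun u v hu hv => ?_) (fun c u hu => ?_) (fun g b hb => ?_)
    · exact this
    · simp only [Set.mem_setOf_eq] at *
      rw [add_mul, map_add, hu, hv, map_add, add_mul]
    · simp only [Set.mem_setOf_eq] at *
      rw [smul_mul_assoc, map_smul, hu, map_smul, smul_mul_assoc]
    · exact (bimod_fiber Bg hmul hzero F hFid hF0 x ha g hb).2
  intro b
  refine diag_induction Bg {a : B | F (b * a) = F b * a}
    (isClosed_eq (F.continuous.comp (continuous_const.mul continuous_id))
      (continuous_const.mul continuous_id))
    (by simp) (fun u v hu hv => ?_) (fun c u hu => ?_) (fun x a ha => stepA x a ha b)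
  · simp only [Set.mem_setOf_eq] at *
    rw [mul_add, map_add, hu, hv, mul_add]
  · simp only [Set.mem_setOf_eq] at *
    rw [mul_smul_comm, map_smul, hu, mul_smul_comm]

include hstar in
lemma diag_star : ∀ a ∈ diag Bg, star a ∈ diag Bg := by
  refine diag_induction Bg {a : B | star a ∈ diag Bg}
    ((isClosed_diag Bg).preimage continuous_star)
    (by simp [diag_zero Bg]) (fun u v hu hv => ?_) (fun c u hu => ?_)
    (fun x b hb => ?_)
  · simp only [Set.mem_setOf_eq, star_add] at *
    exact diag_add Bg hu hv
  · simp only [Set.mem_setOf_eq, star_smul] at *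
    exact diag_smul Bg _ hu
  · simp only [Set.mem_setOf_eq]
    have := hstar (Mor.id x) hb
    rw [inv_id] at this
    exact mem_diag_of_id Bg this

include hmul hzero hstar hdense hFrange hFid hF0 in
lemma key_ineq : ∀ b : B, ‖F b‖ ^ 2 ≤ ‖F (star b * b)‖ := by
  intro b
  set a := F b with ha_def
  have ha : a ∈ diag Bg := hFrange b
  have hsa : star a ∈ diag Bg := diag_star Bg hstar a ha
  have e1 : F (star a * a) = star a * a := by
    rw [bimod_left Bg hmul hzero hdense F hFid hF0 a (star a) hsa,
      hFid a ha]
  have e2 : F (star a * b) = star a * a := by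
    rw [bimod_left Bg hmul hzero hdense F hFid hF0 b (star a) hsa]
  have e3 : F (star b * a) = star a * a := by
    rw [bimod_right Bg hmul hzero hdense F hFid hF0 (star b) a ha,
      F_star Bg hstar hdense F hFid hF0 b]
  have hpos := F_pos_on Bg hmul hzero hstar hdense F hFid hF0 (a - b)
  have hexp : star (a - b) * (a - b)
      = star a * a - star a * b - (star b * a - star b * b) := by
    rw [star_sub, sub_mul, mul_sub, mul_sub]
  rw [hexp, map_sub, map_sub, map_sub, e1, e2, e3] at hpos
  have hle : star a * a ≤ F (star b * b) := by
    have hpos' : 0 ≤ F (star b * b) - star a * a := by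
      convert hpos using 1
      abel
    exact sub_nonneg.mp hpos'
  have hnorm := CStarAlgebra.norm_le_norm_of_nonneg_of_le (star_mul_self_nonneg a) hle
  calc ‖a‖ ^ 2 = ‖star a * a‖ := by
        rw [CStarRing.norm_star_mul_self, sq]
    _ ≤ ‖F (star b * b)‖ := hnorm

include hmul hzero hstar hdense hFrange hFid hF0 in
lemma iter_ineq : ∀ (n : ℕ) (b : B), ‖F b‖ ^ (2 ^ n) ≤ ‖F‖ * ‖b‖ ^ (2 ^ n) := by
  intro n
  induction n with
  | zero => intro b; simpa using F.le_opNorm b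
  | succ n ih =>
    intro b
    have h1 : ‖F b‖ ^ (2 ^ (n + 1)) = (‖F b‖ ^ 2) ^ (2 ^ n) := by
      rw [← pow_mul, pow_succ, mul_comm]
    have h2 : (‖F b‖ ^ 2) ^ (2 ^ n) ≤ ‖F (star b * b)‖ ^ (2 ^ n) :=
      pow_le_pow_left₀ (sq_nonneg _)
        (key_ineq Bg hmul hzero hstar hdense F hFrange hFid hF0 b) _
    have h3 : ‖F (star b * b)‖ ^ (2 ^ n) ≤ ‖F‖ * ‖star b * b‖ ^ (2 ^ n) :=
      ih (star b * b)
    have h4 : ‖star b * b‖ ^ (2 ^ n) = ‖b‖ ^ (2 ^ (n + 1)) := by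
      rw [CStarRing.norm_star_mul_self, ← sq, ← pow_mul, pow_succ, mul_comm]
    calc ‖F b‖ ^ (2 ^ (n + 1)) = (‖F b‖ ^ 2) ^ (2 ^ n) := h1
      _ ≤ ‖F (star b * b)‖ ^ (2 ^ n) := h2
      _ ≤ ‖F‖ * ‖star b * b‖ ^ (2 ^ n) := h3
      _ = ‖F‖ * ‖b‖ ^ (2 ^ (n + 1)) := by rw [h4]

include hmul hzero hstar hdense hFrange hFid hF0 in
lemma norm_le_one : ‖F‖ ≤ 1 := by
  have hb : ∀ b : B, ‖F b‖ ≤ ‖b‖ := by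
    intro b
    by_cases hb0 : ‖b‖ = 0
    · rw [norm_eq_zero] at hb0
      simp [hb0]
    · have hbpos : 0 < ‖b‖ := lt_of_le_of_ne (norm_nonneg b) (Ne.symm hb0)
      by_contra hcon
      push_neg at hcon
      set r := ‖F b‖ / ‖b‖ with hr_def
      have hr1 : 1 < r := (one_lt_div hbpos).mpr hcon
      have hbound : ∀ n : ℕ, r ^ n ≤ ‖F‖ := by
        intro n
        have h1 := iter_ineq Bg hmul hzero hstar hdense F hFrange hFid hF0 n b
        have h2 : r ^ (2 ^ n) ≤ ‖F‖ := by
          rw [hr_def, div_pow, div_le_iff₀ (by positivity)]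
          exact h1
        calc r ^ n ≤ r ^ (2 ^ n) :=
              pow_le_pow_right₀ hr1.le (Nat.le_of_lt (Nat.lt_two_pow_self (n := n)))
          _ ≤ ‖F‖ := h2
      obtain ⟨n, hn⟩ :=
        ((tendsto_pow_atTop_atTop_of_one_lt hr1).eventually_gt_atTop ‖F‖).exists
      exact absurd (hbound n) (not_le.mpr hn)
  exact F.opNorm_le_bound zero_le_one (fun b => by simpa using hb b)

end

end MyAux14

open MyAux14 in

/-- let `B` be a C*-algebra with closed subspaces `{B_g}` indexed
by the morphisms of a discrete groupoid satisfying `B_f B_g ⊆ B_{fg}` for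
composable pairs, `B_f B_g = 0` otherwise, `B_g* = B_{g⁻¹}`, and with `Σ_g B_g`
dense.  If `F : B → closure span{B_{1_x}}` is a bounded linear map restricting
to the identity there and vanishing on all `B_g` with `g` not an identity, then
`F` is a conditional expectation (contractive, positive, idempotent, bimodule
map over the diagonal) and the subspaces `{B_g}` are linearly independent,
i.e. they form a topological `G`-grading of `B`. -/
theorem statement14 [NonUnitalCStarAlgebra B] [PartialOrder B] [StarOrderedRing B]
    (Bg : Mor V → Submodule ℂ B)
    (hclosed : ∀ f, IsClosed (Bg f : Set B))
    (hmul : ∀ (f g : Mor V) (h : g.tgt = f.src) ⦃a b : B⦄,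
      a ∈ Bg f → b ∈ Bg g → a * b ∈ Bg (f.comp g h))
    (hzero : ∀ f g : Mor V, g.tgt ≠ f.src →
      ∀ ⦃a b : B⦄, a ∈ Bg f → b ∈ Bg g → a * b = 0)
    (hstar : ∀ (f : Mor V) ⦃a : B⦄, a ∈ Bg f → star a ∈ Bg f.inv)
    (hdense : Dense (↑(Submodule.span ℂ (⋃ f : Mor V, (Bg f : Set B))) : Set B))
    (F : B →L[ℂ] B)
    (hFrange : ∀ b : B, F b ∈ diag Bg)
    (hFid : ∀ b ∈ diag Bg, F b = b)
    (hF0 : ∀ f : Mor V, ¬ f.IsId → ∀ b ∈ Bg f, F b = 0) :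
    (‖F‖ ≤ 1) ∧
    (∀ b : B, 0 ≤ b → 0 ≤ F b) ∧
    (∀ b : B, F (F b) = F b) ∧
    (∀ a b : B, a ∈ diag Bg → F (a * b) = a * F b ∧ F (b * a) = F b * a) ∧
    (∀ (s : Finset (Mor V)) (b : Mor V → B), (∀ f, b f ∈ Bg f) →
      (∑ f ∈ s, b f) = 0 → ∀ f ∈ s, b f = 0) := by
  refine ⟨norm_le_one Bg hmul hzero hstar hdense F hFrange hFid hF0,
    ?_, fun b => hFid (F b) (hFrange b),
    fun a b ha => ⟨bimod_left Bg hmul hzero hdense F hFid hF0 b a ha,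
      bimod_right Bg hmul hzero hdense F hFid hF0 b a ha⟩, ?_⟩
  · intro b hb
    rw [StarOrderedRing.nonneg_iff] at hb
    refine AddSubmonoid.closure_induction (fun x hx => ?_) (by simp) (fun x y _ _ hx hy => ?_) hb
    · obtain ⟨s, rfl⟩ := hx
      exact F_pos_on Bg hmul hzero hstar hdense F hFid hF0 s
    · rw [map_add]
      exact add_nonneg hx hy
  · intro s b hb hsum g hg
    have h0 : star (b g) * b g = 0 := by
      calc star (b g) * b g = ∑ h ∈ s, F (star (b g) * b h) :=
            (F_star_mul_sum Bg hmul hzero hstar F hFid hF0 s b (fun f _ => hb f) hg).symm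
        _ = F (star (b g) * ∑ h ∈ s, b h) := by rw [Finset.mul_sum, map_sum]
        _ = 0 := by rw [hsum, mul_zero, map_zero]
    exact (CStarRing.star_mul_self_eq_zero_iff (b g)).mp h0
end

section
/- Let B be a topologically G-graded C*-algebra over a discrete groupoid G, with grading {B_g} and conditional expectation F vanishing on B_g for non-identity g. Then for each morphism g there exists a contractive linear map F_g : B → B_g such that F_g(b) = b_g for every finite sum b = Σ_h b_h with b_h ∈ B_h. -/
open CategoryTheory
open scoped Classical

universe v u

namespace MyAux

variable {V : Type v} [Groupoid V]

lemma inv_comp_self (g : Mor V) (h : g.tgt = (Mor.inv g).src) :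
    Mor.comp (Mor.inv g) g h = Mor.id g.src := by
  obtain ⟨gs, gt, gh⟩ := g
  dsimp only [Mor.tgt, Mor.src, Mor.inv] at h
  simp [Mor.comp, Mor.id, Mor.inv, Mor.hom, Mor.src, Mor.tgt, Groupoid.inv_eq_inv] at h ⊢
  rfl

lemma eq_of_inv_comp_isId (g f : Mor V) (h : f.tgt = (Mor.inv g).src)
    (hid : (Mor.comp (Mor.inv g) f h).IsId) : f = g := by
  obtain ⟨fs, ft, fh⟩ := f
  obtain ⟨gs, gt, gh⟩ := g
  obtain ⟨x, hx⟩ := hid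
  dsimp [Mor.tgt, Mor.src, Mor.inv] at h
  subst h
  dsimp [Mor.comp, Mor.inv, Mor.id, Mor.hom, Mor.src, Mor.tgt] at hx
  obtain ⟨h1, h2⟩ := Sigma.mk.inj_iff.mp hx
  subst h1
  obtain ⟨h3, h4⟩ := Sigma.mk.inj_iff.mp (eq_of_heq h2)
  subst h3
  have h5 := eq_of_heq h4
  simp only [eqToHom_refl, Category.id_comp, Groupoid.inv_eq_inv] at h5
  have : fh = gh := by
    have h6 := congrArg (fun z => z ≫ gh) h5
    simpa using h6
  rw [this]

end MyAux

open scoped DirectSum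

variable {V : Type v} [Groupoid V] {B : Type u}

/-- let `B` be a topologically `G`-graded C*-algebra over a
discrete groupoid `G`, with grading `{B_g}` and conditional expectation `F`
onto the closed span of the unit fibers vanishing on `B_g` for non-identity
`g`.  Then for each morphism `g` there is a contractive linear map
`F_g : B → B_g` with `F_g(b) = b_g` for every finite sum `b = Σ_h b_h`
(`b_h ∈ B_h`). -/
theorem statement15 [NonUnitalCStarAlgebra B] [PartialOrder B] [StarOrderedRing B]
    (Bg : Mor V → Submodule ℂ B)
    (hclosed : ∀ f, IsClosed (Bg f : Set B))
    (hmul : ∀ (f g : Mor V) (h : g.tgt = f.src) ⦃a b : B⦄,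
      a ∈ Bg f → b ∈ Bg g → a * b ∈ Bg (f.comp g h))
    (hzero : ∀ f g : Mor V, g.tgt ≠ f.src →
      ∀ ⦃a b : B⦄, a ∈ Bg f → b ∈ Bg g → a * b = 0)
    (hstar : ∀ (f : Mor V) ⦃a : B⦄, a ∈ Bg f → star a ∈ Bg f.inv)
    (hdense : Dense (↑(Submodule.span ℂ (⋃ f : Mor V, (Bg f : Set B))) : Set B))
    (hind : ∀ (s : Finset (Mor V)) (b : Mor V → B), (∀ f, b f ∈ Bg f) →
      (∑ f ∈ s, b f) = 0 → ∀ f ∈ s, b f = 0)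
    (F : B →L[ℂ] B)
    (hFnorm : ‖F‖ ≤ 1)
    (hFpos : ∀ b : B, 0 ≤ b → 0 ≤ F b)
    (hFrange : ∀ b : B, F b ∈ diag Bg)
    (hFid : ∀ b ∈ diag Bg, F b = b)
    (hF0 : ∀ f : Mor V, ¬ f.IsId → ∀ b ∈ Bg f, F b = 0) :
    ∀ g : Mor V, ∃ Fg : B →L[ℂ] B,
      ‖Fg‖ ≤ 1 ∧ (∀ b : B, Fg b ∈ Bg g) ∧
      ∀ (s : Finset (Mor V)) (b : Mor V → B), (∀ f, b f ∈ Bg f) →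
        Fg (∑ f ∈ s, b f) = if g ∈ s then b g else 0 := by
  classical
  intro g
  have hdiagmem : ∀ (x : V) (a : B), a ∈ Bg (Mor.id x) → a ∈ diag Bg := by
    intro x a ha
    exact subset_closure (Submodule.subset_span (Set.mem_iUnion.2 ⟨x, ha⟩))
  have keyF : ∀ (s : Finset (Mor V)) (b : Mor V → B), (∀ f, b f ∈ Bg f) → g ∈ s →
      F (star (b g) * ∑ f ∈ s, b f) = star (b g) * b g := by
    intro s b hb hg
    rw [Finset.mul_sum, map_sum]
    rw [Finset.sum_eq_single g ?h1 ?h2]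
    · have hmem := hmul (Mor.inv g) g rfl (hstar g (hb g)) (hb g)
      rw [MyAux.inv_comp_self g rfl] at hmem
      exact hFid _ (hdiagmem _ _ hmem)
    case h1 =>
      intro f hf hfg
      by_cases ht : f.tgt = (Mor.inv g).src
      · have hmem := hmul (Mor.inv g) f ht (hstar g (hb g)) (hb f)
        refine hF0 _ ?_ _ hmem
        intro hid
        exact hfg (MyAux.eq_of_inv_comp_isId g f ht hid)
      · rw [hzero (Mor.inv g) f ht (hstar g (hb g)) (hb f), map_zero]
    case h2 => intro h; exact absurd hg h
  have keyB : ∀ (s : Finset (Mor V)) (b : Mor V → B), (∀ f, b f ∈ Bg f) →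
      ‖(if g ∈ s then b g else 0 : B)‖ ≤ ‖∑ f ∈ s, b f‖ := by
    intro s b hb
    by_cases hg : g ∈ s
    · simp only [if_pos hg]
      by_cases hc : b g = 0
      · simp [hc]
      · have hpos : 0 < ‖b g‖ := norm_pos_iff.mpr hc
        have h1 : ‖b g‖ * ‖b g‖ ≤ ‖b g‖ * ‖∑ f ∈ s, b f‖ := by
          calc ‖b g‖ * ‖b g‖ = ‖star (b g) * b g‖ := (CStarRing.norm_star_mul_self).symm
          _ = ‖F (star (b g) * ∑ f ∈ s, b f)‖ := by rw [keyF s b hb hg]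
          _ ≤ ‖F‖ * ‖star (b g) * ∑ f ∈ s, b f‖ := F.le_opNorm _
          _ ≤ 1 * ‖star (b g) * ∑ f ∈ s, b f‖ :=
              mul_le_mul_of_nonneg_right hFnorm (norm_nonneg _)
          _ = ‖star (b g) * ∑ f ∈ s, b f‖ := one_mul _
          _ ≤ ‖star (b g)‖ * ‖∑ f ∈ s, b f‖ := norm_mul_le _ _
          _ = ‖b g‖ * ‖∑ f ∈ s, b f‖ := by rw [norm_star]
        exact le_of_mul_le_mul_left h1 hpos
    · simp [hg]
  set S : Submodule ℂ B := Submodule.span ℂ (⋃ f : Mor V, (Bg f : Set B)) with hSdef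
  have hSsup : (⨆ f, Bg f) = S := by
    rw [hSdef, Submodule.span_iUnion]
    simp [Submodule.span_eq]
  set Φ : (⨁ f, ↥(Bg f)) →ₗ[ℂ] B := DirectSum.coeLinearMap Bg with hΦdef
  have hΦsum : ∀ x : ⨁ f, ↥(Bg f), Φ x = ∑ f ∈ x.support, ((x f : B)) := by
    intro x
    rw [hΦdef, DirectSum.coeLinearMap_eq_dfinsuppSum]
    rfl
  have hinj : Function.Injective Φ := by
    rw [injective_iff_map_eq_zero]
    intro x hx
    have hxs : ∑ f ∈ x.support, ((x f : B)) = 0 := by rw [← hΦsum x]; exact hx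
    have hz := hind x.support (fun f => ((x f : B))) (fun f => (x f).2) hxs
    apply DFinsupp.ext
    intro f
    by_cases hf : f ∈ x.support
    · exact Subtype.ext (hz f hf)
    · simpa using DFinsupp.notMem_support_iff.mp hf
  have hrange : LinearMap.range Φ = S := by
    rw [hΦdef, DirectSum.range_coeLinearMap, hSsup]
  let E : (⨁ f, ↥(Bg f)) ≃ₗ[ℂ] S :=
    (LinearEquiv.ofInjective Φ hinj).trans (LinearEquiv.ofEq _ _ hrange)
  have hEcoe : ∀ x, ((E x : B)) = Φ x := fun x => rfl
  let p : S →ₗ[ℂ] B :=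
    (Bg g).subtype ∘ₗ (DirectSum.component ℂ (Mor V) (fun f => ↥(Bg f)) g) ∘ₗ
      E.symm.toLinearMap
  have hpval : ∀ y : S, p y = (((E.symm y) g : B)) := fun y => rfl
  have hpmem : ∀ y : S, p y ∈ Bg g := fun y => by rw [hpval]; exact ((E.symm y) g).2
  have hpbound : ∀ y : S, ‖p y‖ ≤ 1 * ‖y‖ := by
    intro y
    rw [one_mul]
    set x := E.symm y with hx
    have hy : (y : B) = Φ x := by rw [hx, ← hEcoe (E.symm y), E.apply_symm_apply]
    have hbnd := keyB x.support (fun f => ((x f : B))) (fun f => (x f).2)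
    have hval : p y = (if g ∈ x.support then ((x g : B)) else 0) := by
      by_cases hg : g ∈ x.support
      · rw [if_pos hg, hpval]
      · rw [if_neg hg, hpval, ← hx, DFinsupp.notMem_support_iff.mp hg]
        rfl
    rw [hval]
    have hny : ‖y‖ = ‖∑ f ∈ x.support, ((x f : B))‖ := by
      rw [← hΦsum x, ← hy]; rfl
    rw [hny]
    exact hbnd
  let P0 : S →L[ℂ] B := p.mkContinuous 1 hpbound
  have hP0norm : ‖P0‖ ≤ 1 := p.mkContinuous_norm_le zero_le_one hpbound
  have hdr : DenseRange (S.subtypeL) := by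
    have : Set.range (S.subtypeL) = (S : Set B) := Subtype.range_coe
    rw [DenseRange, this]
    exact hdense
  have hub : ∀ y : S, ‖y‖ ≤ ((1 : NNReal) : ℝ) * ‖S.subtypeL y‖ := by
    intro y; simp
  let Fg : B →L[ℂ] B := P0.extend S.subtypeL
  have hFgeq : ∀ y : S, Fg (y : B) = P0 y := fun y =>
    ContinuousLinearMap.extend_eq P0 hdr
      (ContinuousLinearMap.isUniformEmbedding_of_bound _ hub).isUniformInducing y
  refine ⟨Fg, ?_, ?_, ?_⟩
  · have hle := P0.opNorm_extend_le hdr hub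
    calc ‖Fg‖ ≤ ((1 : NNReal) : ℝ) * ‖P0‖ := hle
    _ ≤ 1 := by simpa using hP0norm
  · intro b
    have hcl : IsClosed {b : B | Fg b ∈ Bg g} := (hclosed g).preimage Fg.continuous
    have hsub : (S : Set B) ⊆ {b : B | Fg b ∈ Bg g} := by
      intro y hy
      have := hFgeq ⟨y, hy⟩
      simp only [Set.mem_setOf_eq]
      rw [this]
      exact hpmem ⟨y, hy⟩
    exact closure_minimal hsub hcl (hdense b)
  · intro s b hb
    have hmemS : (∑ f ∈ s, b f) ∈ S :=
      Submodule.sum_mem _ (fun f _ => Submodule.subset_span (Set.mem_iUnion.2 ⟨f, hb f⟩))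
    set X : ⨁ f, ↥(Bg f) := ∑ f ∈ s, DirectSum.lof ℂ (Mor V) (fun f => ↥(Bg f)) f ⟨b f, hb f⟩
      with hX
    have hΦX : Φ X = ∑ f ∈ s, b f := by
      rw [hX, map_sum]
      refine Finset.sum_congr rfl (fun f _ => ?_)
      rw [DirectSum.lof_eq_of, hΦdef, DirectSum.coeLinearMap_of]
    have hEX : E X = ⟨∑ f ∈ s, b f, hmemS⟩ := Subtype.ext (by rw [hEcoe, hΦX])
    have hFgsum : Fg (∑ f ∈ s, b f) = P0 ⟨∑ f ∈ s, b f, hmemS⟩ := hFgeq ⟨_, hmemS⟩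
    rw [hFgsum]
    have hval : P0 ⟨∑ f ∈ s, b f, hmemS⟩ = (((E.symm ⟨∑ f ∈ s, b f, hmemS⟩) g : B)) :=
      hpval _
    rw [hval, ← hEX, E.symm_apply_apply]
    have hXg : X g = if g ∈ s then (⟨b g, hb g⟩ : Bg g) else 0 := by
      rw [hX, DFinsupp.finset_sum_apply]
      have : ∀ f ∈ s, (DirectSum.lof ℂ (Mor V) (fun f => ↥(Bg f)) f ⟨b f, hb f⟩) g
          = if h : f = g then Eq.recOn h (⟨b f, hb f⟩ : Bg f) else 0 :=
        fun f _ => DirectSum.component.of (R := ℂ) (ι := Mor V) (M := fun f => ↥(Bg f))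
          (i := g) (j := f) ⟨b f, hb f⟩
      rw [Finset.sum_congr rfl this, Finset.sum_dite_eq' s g]
    rw [hXg]
    split <;> simp
end

section
/- Let B be a topologically G-graded C*-algebra whose conditional expectation F onto the closed span of the unit fibers is faithful. Then the canonical surjective *-homomorphism λ_B : B → C*_r(Fb) onto the reduced cross sectional algebra of the associated Fell bundle Fb = {B_g} (sending b_g ∈ B_g to Λ(b_g)) is injective, hence a *-isomorphism. -/
open CategoryTheory

universe v u u₁

variable {V : Type v} [Groupoid V] {B : Type u}

section Aux
variable {A : Type*} [NonUnitalCStarAlgebra A] [PartialOrder A] [StarOrderedRing A]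

lemma aux_sq_le {a : A} (ha : 0 ≤ a) : a * a ≤ ‖a‖ • a := by
  have h := CStarAlgebra.star_left_conjugate_le_norm_smul (a := CFC.sqrt a) (b := a)
    (IsSelfAdjoint.of_nonneg ha)
  have hs : star (CFC.sqrt a) = CFC.sqrt a :=
    (IsSelfAdjoint.of_nonneg (CFC.sqrt_nonneg (a := a))).star_eq
  rw [hs] at h
  set sq := CFC.sqrt a with hsqd
  have hmul : sq * sq = a := CFC.sqrt_mul_sqrt_self a ha
  rw [hmul] at h
  calc a * a = sq * a * sq := by rw [← hmul]; simp only [mul_assoc]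
    _ ≤ ‖a‖ • a := h

lemma aux_mul_orth {p q r s : A} (h : q * r = 0) : (p * q) * (r * s) = 0 := by
  rw [mul_assoc, ← mul_assoc q r s, h, zero_mul, mul_zero]

variable {ι : Type*}

lemma aux_le_norm_sum (s : Finset ι) (c : ι → A) (hpos : ∀ i ∈ s, 0 ≤ c i)
    {i : ι} (hi : i ∈ s) : ‖c i‖ ≤ ‖∑ j ∈ s, c j‖ :=
  CStarAlgebra.norm_le_norm_of_nonneg_of_le (hpos i hi)
    (Finset.single_le_sum hpos hi)

lemma aux_norm_sum_le (s : Finset ι) (c : ι → A)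
    (hpos : ∀ i ∈ s, 0 ≤ c i)
    (horth : ∀ i ∈ s, ∀ j ∈ s, i ≠ j → c i * c j = 0)
    {M : ℝ} (hM : 0 ≤ M) (hMc : ∀ i ∈ s, ‖c i‖ ≤ M) :
    ‖∑ i ∈ s, c i‖ ≤ M := by
  set t := ∑ i ∈ s, c i with ht
  have htpos : 0 ≤ t := Finset.sum_nonneg hpos
  have htsa : star t = t := (IsSelfAdjoint.of_nonneg htpos).star_eq
  have htsq : t * t = ∑ i ∈ s, c i * c i := by
    rw [ht, Finset.sum_mul_sum]
    refine Finset.sum_congr rfl fun i hi => ?_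
    exact Finset.sum_eq_single i (fun j hj hji => horth i hi j hj (Ne.symm hji))
      (fun h => absurd hi h)
  have hle : t * t ≤ M • t := by
    rw [htsq, ht, Finset.smul_sum]
    refine Finset.sum_le_sum fun i hi => ?_
    calc c i * c i ≤ ‖c i‖ • c i := aux_sq_le (hpos i hi)
      _ ≤ M • c i := by
        rw [← sub_nonneg, ← sub_smul]
        exact smul_nonneg (sub_nonneg.mpr (hMc i hi)) (hpos i hi)
  have httpos : 0 ≤ t * t := by
    have := star_mul_self_nonneg t
    rwa [htsa] at this
  have h1 : ‖t * t‖ ≤ M * ‖t‖ := by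
    calc ‖t * t‖ ≤ ‖M • t‖ := CStarAlgebra.norm_le_norm_of_nonneg_of_le httpos hle
      _ = M * ‖t‖ := by rw [norm_smul, Real.norm_of_nonneg hM]
  have h2 : ‖t‖ * ‖t‖ = ‖t * t‖ := by
    rw [← CStarRing.norm_star_mul_self, htsa]
  rcases eq_or_lt_of_le (norm_nonneg t) with h0 | h0
  · rw [← h0]; exact hM
  · exact le_of_mul_le_mul_right (by rw [h2]; linarith) h0

lemma aux_norm_sq_sum (s : Finset ι) (a : ι → A)
    (horth : ∀ i ∈ s, ∀ j ∈ s, i ≠ j → star (a i) * a j = 0) :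
    ‖∑ i ∈ s, a i‖ ^ 2 = ‖∑ i ∈ s, star (a i) * a i‖ := by
  have : star (∑ i ∈ s, a i) * (∑ i ∈ s, a i) = ∑ i ∈ s, star (a i) * a i := by
    rw [star_sum, Finset.sum_mul_sum]
    refine Finset.sum_congr rfl fun i hi => ?_
    exact Finset.sum_eq_single i (fun j hj hji => horth i hi j hj (Ne.symm hji))
      (fun h => absurd hi h)
  rw [← this, CStarRing.norm_star_mul_self, sq]

lemma aux_norm_sum_eq {A₂ : Type*} [NonUnitalCStarAlgebra A₂] [PartialOrder A₂]
    [StarOrderedRing A₂] (s : Finset ι) (c : ι → A) (c' : ι → A₂)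
    (hpos : ∀ i ∈ s, 0 ≤ c i) (hpos' : ∀ i ∈ s, 0 ≤ c' i)
    (horth : ∀ i ∈ s, ∀ j ∈ s, i ≠ j → c i * c j = 0)
    (horth' : ∀ i ∈ s, ∀ j ∈ s, i ≠ j → c' i * c' j = 0)
    (hnorm : ∀ i ∈ s, ‖c i‖ = ‖c' i‖) :
    ‖∑ i ∈ s, c i‖ = ‖∑ i ∈ s, c' i‖ := by
  refine le_antisymm ?_ ?_
  · exact aux_norm_sum_le s c hpos horth (norm_nonneg _)
      (fun i hi => (hnorm i hi).le.trans (aux_le_norm_sum s c' hpos' hi))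
  · exact aux_norm_sum_le s c' hpos' horth' (norm_nonneg _)
      (fun i hi => (hnorm i hi).ge.trans (aux_le_norm_sum s c hpos hi))

end Aux
/-- let `B` be a topologically `G`-graded C*-algebra whose
conditional expectation `F` onto the closed span of the unit fibers is
faithful.  Then the canonical surjection `λ_B : B → C*_r(Fb)` onto the reduced
cross sectional algebra of the associated Fell bundle `Fb = {B_g}` (sending
`b_g ∈ B_g` to `Λ(b_g)`, and intertwining `F` with the canonical faithful
expectation `E` of `C*_r(Fb)`) is injective, hence a *-isomorphism. -/
theorem statement16 [NonUnitalCStarAlgebra B] [PartialOrder B] [StarOrderedRing B]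
    (Bg : Mor V → Submodule ℂ B)
    (hclosed : ∀ f, IsClosed (Bg f : Set B))
    (hmul : ∀ (f g : Mor V) (h : g.tgt = f.src) ⦃a b : B⦄,
      a ∈ Bg f → b ∈ Bg g → a * b ∈ Bg (f.comp g h))
    (hzero : ∀ f g : Mor V, g.tgt ≠ f.src →
      ∀ ⦃a b : B⦄, a ∈ Bg f → b ∈ Bg g → a * b = 0)
    (hstar : ∀ (f : Mor V) ⦃a : B⦄, a ∈ Bg f → star a ∈ Bg f.inv)
    (hdense : Dense (↑(Submodule.span ℂ (⋃ f : Mor V, (Bg f : Set B))) : Set B))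
    (hind : ∀ (s : Finset (Mor V)) (b : Mor V → B), (∀ f, b f ∈ Bg f) →
      (∑ f ∈ s, b f) = 0 → ∀ f ∈ s, b f = 0)
    -- the conditional expectation, assumed faithful
    (F : B →L[ℂ] B)
    (hFnorm : ‖F‖ ≤ 1)
    (hFpos : ∀ b : B, 0 ≤ b → 0 ≤ F b)
    (hFrange : ∀ b : B, F b ∈ diag Bg)
    (hFid : ∀ b ∈ diag Bg, F b = b)
    (hF0 : ∀ f : Mor V, ¬ f.IsId → ∀ b ∈ Bg f, F b = 0)
    (hFfaithful : ∀ b : B, F (star b * b) = 0 → b = 0)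
    -- the reduced cross sectional algebra `R = C*_r(Fb)` of the bundle `{B_g}`
    {R : Type u₁} [NonUnitalCStarAlgebra R] [PartialOrder R] [StarOrderedRing R]
    (Lam : Mor V → B →ₗ[ℂ] R)
    (hLmul : ∀ (f g : Mor V) (h : g.tgt = f.src) (b c : B), b ∈ Bg f →
      c ∈ Bg g → Lam f b * Lam g c = Lam (f.comp g h) (b * c))
    (hLzero : ∀ f g : Mor V, g.tgt ≠ f.src → ∀ b c : B, b ∈ Bg f →
      c ∈ Bg g → Lam f b * Lam g c = 0)
    (hLstar : ∀ (f : Mor V) (b : B), b ∈ Bg f → star (Lam f b) = Lam f.inv (star b))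
    (hLisom : ∀ (f : Mor V) (b : B), b ∈ Bg f → ‖Lam f b‖ = ‖b‖)
    (hLdense : Dense
      (↑(Submodule.span ℂ (⋃ f : Mor V, Lam f '' (Bg f : Set B))) : Set R))
    -- the canonical faithful conditional expectation of `C*_r(Fb)`
    (ER : R →L[ℂ] R)
    (hER₁ : ∀ (x : V) (b : B), b ∈ Bg (Mor.id x) →
      ER (Lam (Mor.id x) b) = Lam (Mor.id x) b)
    (hER₂ : ∀ (f : Mor V), ¬ f.IsId → ∀ b ∈ Bg f, ER (Lam f b) = 0)
    (hERfaithful : ∀ r : R, 0 ≤ r → ER r = 0 → r = 0)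
    -- the canonical map `λ_B`
    (lamB : B →⋆ₙₐ[ℂ] R)
    (hlamB : ∀ (f : Mor V) (b : B), b ∈ Bg f → lamB b = Lam f b)
    (hcompat : ∀ b : B, ER (lamB b) = lamB (F b)) :
    Function.Injective lamB ∧ Function.Surjective lamB := by
  classical
  -- continuity of `lamB`
  have hcont : Continuous lamB :=
    AddMonoidHomClass.continuous_of_bound lamB 1
      (fun b => by simpa using NonUnitalStarAlgHom.norm_apply_le lamB b)
  -- `lamB` is isometric on the span of the unit fibers
  have hspaneq : Submodule.span ℂ (⋃ x : V, (Bg (Mor.id x) : Set B))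
      = ⨆ x : V, Bg (Mor.id x) := by
    rw [Submodule.span_iUnion]
    simp only [Submodule.span_eq]
  have hisoS : ∀ d ∈ (↑(Submodule.span ℂ (⋃ x : V, (Bg (Mor.id x) : Set B))) : Set B),
      ‖lamB d‖ = ‖d‖ := by
    intro d hd
    rw [SetLike.mem_coe, hspaneq, Submodule.mem_iSup_iff_exists_finsupp] at hd
    obtain ⟨φ, hφmem, hφsum⟩ := hd
    rw [Finsupp.sum] at hφsum
    set a : V → R := fun x => Lam (Mor.id x) (φ x) with ha
    -- orthogonality on the `B` side
    have horthB : ∀ x y : V, x ≠ y → star (φ x) * φ y = 0 := fun x y hxy =>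
      hzero (Mor.id x).inv (Mor.id y) (Ne.symm hxy) (hstar _ (hφmem x)) (hφmem y)
    have horthB2 : ∀ x y : V, x ≠ y → φ x * star (φ y) = 0 := fun x y hxy =>
      hzero (Mor.id x) (Mor.id y).inv (Ne.symm hxy) (hφmem x) (hstar _ (hφmem y))
    -- orthogonality on the `R` side
    have hstarR : ∀ x : V, star (a x) = Lam (Mor.id x).inv (star (φ x)) := fun x =>
      hLstar _ _ (hφmem x)
    have horthR : ∀ x y : V, x ≠ y → star (a x) * a y = 0 := fun x y hxy => by
      rw [hstarR]
      exact hLzero (Mor.id x).inv (Mor.id y) (Ne.symm hxy) _ _ (hstar _ (hφmem x)) (hφmem y)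
    have horthR2 : ∀ x y : V, x ≠ y → a x * star (a y) = 0 := fun x y hxy => by
      rw [hstarR]
      exact hLzero (Mor.id x) (Mor.id y).inv (Ne.symm hxy) _ _ (hφmem x) (hstar _ (hφmem y))
    -- norms of the diagonal products agree
    have hdiagR : ∀ x : V, star (a x) * a x
        = Lam ((Mor.id x).inv.comp (Mor.id x) rfl) (star (φ x) * φ x) := fun x => by
      rw [hstarR]
      exact hLmul (Mor.id x).inv (Mor.id x) rfl _ _ (hstar _ (hφmem x)) (hφmem x)
    have hnorm : ∀ x : V, ‖star (φ x) * φ x‖ = ‖star (a x) * a x‖ := fun x => by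
      rw [hdiagR]
      exact (hLisom _ _ (hmul (Mor.id x).inv (Mor.id x) rfl (hstar _ (hφmem x)) (hφmem x))).symm
    -- rewrite `lamB d` as a sum
    have hlamd : lamB d = ∑ x ∈ φ.support, a x := by
      rw [← hφsum, map_sum]
      exact Finset.sum_congr rfl fun x _ => hlamB (Mor.id x) (φ x) (hφmem x)
    have hd' : d = ∑ x ∈ φ.support, φ x := hφsum.symm
    -- compute both norms
    have h1 : ‖lamB d‖ ^ 2 = ‖∑ x ∈ φ.support, star (a x) * a x‖ := by
      rw [hlamd]
      exact aux_norm_sq_sum _ a (fun x _ y _ h => horthR x y h)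
    have h2 : ‖d‖ ^ 2 = ‖∑ x ∈ φ.support, star (φ x) * φ x‖ := by
      conv_lhs => rw [hd']
      exact aux_norm_sq_sum _ _ (fun x _ y _ h => horthB x y h)
    have h3 : ‖∑ x ∈ φ.support, star (φ x) * φ x‖
        = ‖∑ x ∈ φ.support, star (a x) * a x‖ := by
      refine aux_norm_sum_eq _ _ _ (fun x _ => star_mul_self_nonneg _)
        (fun x _ => star_mul_self_nonneg _) ?_ ?_ (fun x _ => hnorm x)
      · exact fun x _ y _ hxy => aux_mul_orth (horthB2 x y hxy)
      · exact fun x _ y _ hxy => aux_mul_orth (horthR2 x y hxy)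
    rw [← sq_eq_sq₀ (norm_nonneg _) (norm_nonneg _), h1, h2, h3]
  -- `lamB` is isometric on `diag Bg` by continuity
  have hisodiag : ∀ d ∈ diag Bg, ‖lamB d‖ = ‖d‖ := by
    intro d hd
    exact Set.EqOn.closure (f := fun x => ‖lamB x‖) (g := fun x => ‖x‖) hisoS
      (hcont.norm) continuous_norm hd
  -- injectivity
  have hinj : Function.Injective lamB := by
    have key : ∀ b : B, lamB b = 0 → b = 0 := by
      intro b hb
      have h1 : lamB (F (star b * b)) = 0 := by
        rw [← hcompat]
        have : lamB (star b * b) = 0 := by rw [map_mul, map_star, hb, star_zero, zero_mul]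
        rw [this, map_zero]
      have h3 : ‖F (star b * b)‖ = 0 := by
        rw [← hisodiag _ (hFrange (star b * b)), h1, norm_zero]
      exact hFfaithful b (norm_eq_zero.mp h3)
    intro x y hxy
    have h0 : lamB (x - y) = 0 := by rw [map_sub, hxy, sub_self]
    exact sub_eq_zero.mp (key _ h0)
  -- surjectivity
  refine ⟨hinj, ?_⟩
  have hiso : Isometry lamB := NonUnitalStarAlgHom.isometry lamB hinj
  have hcr : IsClosed (Set.range lamB) := hiso.isClosedEmbedding.isClosed_range
  have hsub : (↑(Submodule.span ℂ (⋃ f : Mor V, Lam f '' (Bg f : Set B))) : Set R)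
      ⊆ Set.range lamB := by
    intro r hr
    rw [SetLike.mem_coe] at hr
    induction hr using Submodule.span_induction with
    | mem x hx =>
      obtain ⟨_, ⟨f, rfl⟩, b, hb, rfl⟩ := hx
      exact ⟨b, hlamB f b hb⟩
    | zero => exact ⟨0, map_zero lamB⟩
    | add x y _ _ hx hy =>
      obtain ⟨bx, rfl⟩ := hx; obtain ⟨by', rfl⟩ := hy
      exact ⟨bx + by', map_add lamB bx by'⟩
    | smul c x _ hx =>
      obtain ⟨bx, rfl⟩ := hx
      exact ⟨c • bx, map_smul lamB c bx⟩
  intro r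
  have : r ∈ closure (↑(Submodule.span ℂ (⋃ f : Mor V, Lam f '' (Bg f : Set B))) : Set R) :=
    hLdense r
  exact hcr.closure_subset_iff.mpr hsub this
end
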